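/- arXiv:2409.14790 — 9 statements merged into one kernel-verified Lean document; each statement's English description precedes it below -/
import Mathlib

section
/- Let x ∈ ℂ^n with Nx ≠ 0. The closure of the image {qf_x(μ) : μ ∈ ℂ, μ ≠ rq_{M,N}(x)} of the quotient function equals the closed disc {z ∈ ℂ : |z − rq_{M,N}(x)| ≤ r₀(x)} of radius r₀(x) centred at rq_{M,N}(x). -/
open Matrix Filter Topology
open scoped ComplexOrder

noncomputable def innerP {n : ℕ} (P : Matrix (Fin n) (Fin n) ℂ) (x y : Fin n → ℂ) : ℂ :=
  star y ⬝ᵥ P.mulVec x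

noncomputable def normP {n : ℕ} (P : Matrix (Fin n) (Fin n) ℂ) (x : Fin n → ℂ) : ℝ :=
  Real.sqrt (innerP P x x).re

noncomputable def rq {n : ℕ} (M N P : Matrix (Fin n) (Fin n) ℂ) (x : Fin n → ℂ) : ℂ :=
  innerP P (M.mulVec x) (N.mulVec x) / innerP P (N.mulVec x) (N.mulVec x)

noncomputable def r0 {n : ℕ} (M N P : Matrix (Fin n) (Fin n) ℂ) (x : Fin n → ℂ) : ℝ :=
  normP P (M.mulVec x - rq M N P x • N.mulVec x) / normP P (N.mulVec x)

noncomputable def qf {n : ℕ} (M N P : Matrix (Fin n) (Fin n) ℂ) (x : Fin n → ℂ) (μ : ℂ) : ℂ :=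
  (innerP P ((M - μ • N).mulVec x) (N.mulVec x) /
      (‖innerP P ((M - μ • N).mulVec x) (N.mulVec x)‖ : ℂ)) *
    ((normP P ((M - μ • N).mulVec x) / normP P (N.mulVec x) : ℝ) : ℂ) + μ

def genSpec {n : ℕ} (M N : Matrix (Fin n) (Fin n) ℂ) : Set ℂ :=
  {l : ℂ | (M - l • N).det = 0}

section Aux

variable {n : ℕ} {P : Matrix (Fin n) (Fin n) ℂ}

lemma innerP_add_left (a b y : Fin n → ℂ) :
    innerP P (a + b) y = innerP P a y + innerP P b y := by
  simp [innerP, mulVec_add, dotProduct_add]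

lemma innerP_sub_left (a b y : Fin n → ℂ) :
    innerP P (a - b) y = innerP P a y - innerP P b y := by
  simp [innerP, mulVec_sub, dotProduct_sub]

lemma innerP_smul_left (c : ℂ) (a y : Fin n → ℂ) :
    innerP P (c • a) y = c * innerP P a y := by
  simp [innerP, mulVec_smul, dotProduct_smul, smul_eq_mul]

lemma innerP_add_right (a b y : Fin n → ℂ) :
    innerP P y (a + b) = innerP P y a + innerP P y b := by
  simp [innerP, star_add, add_dotProduct]

lemma innerP_smul_right (c : ℂ) (a y : Fin n → ℂ) :
    innerP P y (c • a) = star c * innerP P y a := by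
  simp [innerP, star_smul, smul_dotProduct, smul_eq_mul]

lemma innerP_conj (hP : P.IsHermitian) (a b : Fin n → ℂ) :
    innerP P a b = star (innerP P b a) := by
  have h : star (innerP P b a) = star (P.mulVec b) ⬝ᵥ a := by
    rw [innerP, star_dotProduct, star_star]
  rw [h, star_mulVec, hP.eq, innerP, dotProduct_mulVec]

lemma innerP_self_eq (hP : P.PosSemidef) (a : Fin n → ℂ) :
    innerP P a a = ((normP P a ^ 2 : ℝ) : ℂ) := by
  have h := hP.dotProduct_mulVec_nonneg a
  rw [Complex.nonneg_iff] at h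
  have hsq : normP P a ^ 2 = (innerP P a a).re := Real.sq_sqrt h.1
  apply Complex.ext
  · rw [Complex.ofReal_re]
    exact hsq.symm
  · rw [Complex.ofReal_im]
    exact h.2.symm

end Aux

lemma qf_formula {n : ℕ} (M N P : Matrix (Fin n) (Fin n) ℂ) (hP : P.PosDef)
    (x : Fin n → ℂ) (hx : N.mulVec x ≠ 0) {μ : ℂ} (hμ : μ ≠ rq M N P x) :
    qf M N P x μ = rq M N P x +
      ((rq M N P x - μ) / (‖rq M N P x - μ‖ : ℂ)) *
        ((Real.sqrt (r0 M N P x ^ 2 + ‖rq M N P x - μ‖ ^ 2) -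
            ‖rq M N P x - μ‖ : ℝ) : ℂ) := by
  set ρ := rq M N P x with hρdef
  set v := N.mulVec x with hvdef
  set u := M.mulVec x - ρ • v with hudef
  set t := ‖ρ - μ‖ with htdef
  have hρμ : ρ - μ ≠ 0 := sub_ne_zero.mpr (Ne.symm hμ)
  have ht : 0 < t := by simpa [htdef] using (norm_pos_iff.mpr hρμ)
  have hvv : innerP P v v = ((normP P v ^ 2 : ℝ) : ℂ) := innerP_self_eq hP.posSemidef v
  have hnv : 0 < (innerP P v v).re := by
    have h : 0 < innerP P v v := hP.dotProduct_mulVec_pos hx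
    rw [Complex.lt_def] at h
    simpa using h.1
  have hb : 0 < normP P v := Real.sqrt_pos.mpr hnv
  have hvvne : innerP P v v ≠ 0 := by
    rw [hvv]
    exact_mod_cast (pow_ne_zero 2 hb.ne')
  have hρ : innerP P (M.mulVec x) v = ρ * innerP P v v := by
    rw [hρdef, rq, div_mul_cancel₀ _ hvvne]
  have hu : innerP P u v = 0 := by
    rw [hudef, innerP_sub_left, innerP_smul_left, hρ]; ring
  have hu' : innerP P v u = 0 := by
    rw [innerP_conj hP.1, hu, star_zero]
  have hmv : (M - μ • N).mulVec x = u + (ρ - μ) • v := by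
    rw [sub_mulVec, smul_mulVec, hudef, sub_smul]
    abel
  have hc : innerP P ((M - μ • N).mulVec x) v = (ρ - μ) * innerP P v v := by
    rw [hmv, innerP_add_left, innerP_smul_left, hu]; ring
  have habs0 : (ρ - μ) * star (ρ - μ) = ((t ^ 2 : ℝ) : ℂ) := by
    rw [Complex.star_def, Complex.mul_conj, htdef, Complex.sq_norm]
  have hself : innerP P ((M - μ • N).mulVec x) ((M - μ • N).mulVec x)
      = ((normP P u ^ 2 + t ^ 2 * normP P v ^ 2 : ℝ) : ℂ) := by
    rw [hmv]
    simp only [innerP_add_left, innerP_add_right, innerP_smul_left, innerP_smul_right,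
      hu, hu', mul_zero, add_zero, zero_add]
    rw [innerP_self_eq hP.posSemidef u, hvv]
    push_cast at habs0 ⊢
    linear_combination ((normP P v : ℂ) ^ 2) * habs0
  have hnorm : normP P ((M - μ • N).mulVec x)
      = Real.sqrt (normP P u ^ 2 + t ^ 2 * normP P v ^ 2) := by
    rw [normP, hself, Complex.ofReal_re]
  have hr0 : r0 M N P x = normP P u / normP P v := rfl
  have hq : normP P ((M - μ • N).mulVec x) / normP P v
      = Real.sqrt (r0 M N P x ^ 2 + t ^ 2) := by
    rw [hnorm, hr0]
    rw [show (normP P u / normP P v) ^ 2 + t ^ 2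
        = (normP P u ^ 2 + t ^ 2 * normP P v ^ 2) / (normP P v) ^ 2 by
      field_simp]
    rw [Real.sqrt_div (by positivity), Real.sqrt_sq hb.le]
  have habsc : (‖(ρ - μ) * ((normP P v ^ 2 : ℝ) : ℂ)‖ : ℂ)
      = (t : ℂ) * ((normP P v ^ 2 : ℝ) : ℂ) := by
    rw [norm_mul, Complex.norm_real, Real.norm_eq_abs,
      abs_of_nonneg (by positivity : (0:ℝ) ≤ normP P v ^ 2)]
    push_cast
    ring
  have htC : (t : ℂ) ≠ 0 := by exact_mod_cast ht.ne'
  have hbC : ((normP P v ^ 2 : ℝ) : ℂ) ≠ 0 := by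
    exact_mod_cast (pow_ne_zero 2 hb.ne')
  rw [qf, ← hvdef, hc, hvv, habsc, hq]
  push_cast
  field_simp
  ring

/-- the closure of the image of the quotient function is the closed disc
of radius `r0 x` centred at the Rayleigh quotient. -/
theorem stmt_1 {n : ℕ} (hn : 1 ≤ n) (M N P : Matrix (Fin n) (Fin n) ℂ)
    (hP : P.PosDef) (x : Fin n → ℂ) (hx : N.mulVec x ≠ 0) :
    closure {z : ℂ | ∃ μ : ℂ, μ ≠ rq M N P x ∧ qf M N P x μ = z} =
      Metric.closedBall (rq M N P x) (r0 M N P x) := by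
  classical
  set ρ := rq M N P x with hρdef
  set r := r0 M N P x with hrdef
  set S : Set ℂ := {z : ℂ | ∃ μ : ℂ, μ ≠ ρ ∧ qf M N P x μ = z} with hSdef
  have hr0 : 0 ≤ r := by
    rw [hrdef]
    unfold r0 normP
    positivity
  -- S ⊆ closed ball
  have hsub : S ⊆ Metric.closedBall ρ r := by
    rintro z ⟨μ, hμ, rfl⟩
    rw [qf_formula M N P hP x hx hμ]
    set t := ‖ρ - μ‖ with htdef
    have hρμ : ρ - μ ≠ 0 := sub_ne_zero.mpr (Ne.symm hμ)
    have ht : 0 < t := norm_pos_iff.mpr hρμ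
    have hS2 : Real.sqrt (r ^ 2 + t ^ 2) ^ 2 = r ^ 2 + t ^ 2 :=
      Real.sq_sqrt (by positivity)
    have hSn : 0 ≤ Real.sqrt (r ^ 2 + t ^ 2) := Real.sqrt_nonneg _
    have hget : t ≤ Real.sqrt (r ^ 2 + t ^ 2) := by nlinarith
    have hgle : Real.sqrt (r ^ 2 + t ^ 2) ≤ r + t := by nlinarith
    rw [Metric.mem_closedBall, dist_eq_norm]
    have : ρ + (ρ - μ) / (t : ℂ) * ((Real.sqrt (r ^ 2 + t ^ 2) - t : ℝ) : ℂ) - ρ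
        = (ρ - μ) / (t : ℂ) * ((Real.sqrt (r ^ 2 + t ^ 2) - t : ℝ) : ℂ) := by ring
    rw [this]
    rw [norm_mul, norm_div]
    simp only [Complex.norm_real, Real.norm_eq_abs, ← htdef]
    rw [abs_of_nonneg (by linarith : (0:ℝ) ≤ t), div_self ht.ne', one_mul,
      abs_of_nonneg (by linarith : (0:ℝ) ≤ Real.sqrt (r ^ 2 + t ^ 2) - t)]
    linarith
  rcases eq_or_lt_of_le hr0 with hr | hr
  · -- r = 0
    have hSeq : S = {ρ} := by
      ext z
      constructor
      · intro hz
        have := hsub hz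
        rw [← hr, Metric.closedBall_zero] at this
        exact this
      · rintro rfl
        refine ⟨ρ + 1, by simp, ?_⟩
        have h1 : (ρ + 1 : ℂ) ≠ ρ := by simp
        rw [qf_formula M N P hP x hx (by rw [← hρdef]; simp : (ρ + 1 : ℂ) ≠ rq M N P x)]
        have h2 : ρ - (ρ + 1) = (-1 : ℂ) := by ring
        rw [← hρdef, ← hrdef, h2, ← hr]
        norm_num
    rw [hSeq, ← hr, Metric.closedBall_zero, closure_singleton]
  · -- 0 < r
    refine subset_antisymm (closure_minimal hsub Metric.isClosed_closedBall) ?_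
    have h1 : Metric.ball ρ r \ {ρ} ⊆ S := by
      rintro z ⟨hzball, hzρ⟩
      have hzρ' : z ≠ ρ := hzρ
      set s := ‖z - ρ‖ with hsdef
      have hs0 : 0 < s := norm_pos_iff.mpr (sub_ne_zero.mpr hzρ')
      have hsr : s < r := by
        have := Metric.mem_ball.mp hzball
        rwa [dist_eq_norm, ← hsdef] at this
      set t := (r ^ 2 - s ^ 2) / (2 * s) with htdef
      have ht : 0 < t := div_pos (by nlinarith) (by linarith)
      set μ := ρ - ((t / s : ℝ) : ℂ) * (z - ρ) with hμdef
      have hρμ : ρ - μ = ((t / s : ℝ) : ℂ) * (z - ρ) := by rw [hμdef]; ring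
      have hts : 0 < t / s := div_pos ht hs0
      have hμne : μ ≠ ρ := by
        intro h
        have : ((t / s : ℝ) : ℂ) * (z - ρ) = 0 := by
          rw [← hρμ, h, sub_self]
        rcases mul_eq_zero.mp this with h' | h'
        · exact hts.ne' (by exact_mod_cast h')
        · exact hzρ' (sub_eq_zero.mp h')
      have habs : ‖ρ - μ‖ = t := by
        rw [hρμ, norm_mul, Complex.norm_real, Real.norm_eq_abs, abs_of_pos hts, ← hsdef,
          div_mul_cancel₀ _ hs0.ne']
      have hsqrt : Real.sqrt (r ^ 2 + t ^ 2) = t + s := by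
        rw [show r ^ 2 + t ^ 2 = (t + s) ^ 2 by
          rw [htdef]; field_simp; ring]
        exact Real.sqrt_sq (by linarith)
      refine ⟨μ, hμne, ?_⟩
      rw [qf_formula M N P hP x hx (by rw [← hρdef]; exact hμne)]
      rw [← hρdef, ← hrdef, habs, hsqrt, hρμ]
      have htsC : ((t : ℝ) : ℂ) ≠ 0 := by exact_mod_cast ht.ne'
      have hsC : ((s : ℝ) : ℂ) ≠ 0 := by exact_mod_cast hs0.ne'
      push_cast
      field_simp
      ring
    calc Metric.closedBall ρ r = closure (Metric.ball ρ r) := (closure_ball ρ hr.ne').symm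
      _ ⊆ closure (closure (Metric.ball ρ r \ {ρ})) := by
          apply closure_mono
          have hd : Dense ({ρ}ᶜ : Set ℂ) := dense_compl_singleton ρ
          intro y hy
          have := hd.open_subset_closure_inter Metric.isOpen_ball hy
          simpa [Set.diff_eq] using this
      _ = closure (Metric.ball ρ r \ {ρ}) := closure_closure
      _ ⊆ closure S := closure_mono h1
end

section
/- Let x ∈ ℂ^n with Nx ≠ 0. Then |qf_x(μ) − rq_{M,N}(x)| → r₀(x) as μ → rq_{M,N}(x) with μ ≠ rq_{M,N}(x); in other words, at its excluded point the quotient function approaches (in modulus of distance to the centre) the circle of radius r₀(x) centred at rq_{M,N}(x). -/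
open Matrix Filter Topology
open scoped ComplexOrder

/-- at the excluded point the quotient function approaches the circle of
radius `r0 x` centred at the Rayleigh quotient. -/
theorem stmt_3 {n : ℕ} (hn : 1 ≤ n) (M N P : Matrix (Fin n) (Fin n) ℂ)
    (hP : P.PosDef) (x : Fin n → ℂ) (hx : N.mulVec x ≠ 0) :
    Tendsto (fun μ : ℂ => ‖qf M N P x μ - rq M N P x‖)
      (𝓝[≠] (rq M N P x)) (𝓝 (r0 M N P x)) := by
  set v := N.mulVec x with hv
  set w := M.mulVec x with hw
  have hd : innerP P v v ≠ 0 := (hP.dotProduct_mulVec_pos hx).ne'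
  -- the sub-mulVec rewriting
  have hsub : ∀ μ : ℂ, (M - μ • N).mulVec x = w - μ • v := by
    intro μ
    rw [Matrix.sub_mulVec, Matrix.smul_mulVec]
  -- inner product expansion
  have hc : ∀ μ : ℂ, innerP P ((M - μ • N).mulVec x) v
      = (rq M N P x - μ) * innerP P v v := by
    intro μ
    have h1 : innerP P ((M - μ • N).mulVec x) v
        = innerP P w v - μ * innerP P v v := by
      rw [hsub]
      simp [innerP, Matrix.mulVec_sub, Matrix.mulVec_smul, dotProduct_sub,
        dotProduct_smul, smul_eq_mul]
    rw [h1, sub_mul, rq, div_mul_cancel₀ _ hd]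
  -- the radius function
  set t : ℂ → ℝ := fun μ => normP P (w - μ • v) / normP P v with ht
  have htnn : ∀ μ, 0 ≤ t μ := fun μ =>
    div_nonneg (Real.sqrt_nonneg _) (Real.sqrt_nonneg _)
  have hinner_cont : Continuous fun u : Fin n → ℂ => innerP P u u := by
    simp only [innerP, Matrix.mulVec, dotProduct]
    continuity
  have htc : Continuous t := by
    exact ((Real.continuous_sqrt.comp (Complex.continuous_re.comp
      (hinner_cont.comp (continuous_const.sub
        (continuous_id.smul continuous_const))))).div_const _)
  have htend : Tendsto t (𝓝[≠] (rq M N P x)) (𝓝 (r0 M N P x)) := by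
    have : t (rq M N P x) = r0 M N P x := rfl
    rw [← this]
    exact (htc.tendsto _).mono_left nhdsWithin_le_nhds
  have habs : Tendsto (fun μ : ℂ => ‖μ - rq M N P x‖)
      (𝓝[≠] (rq M N P x)) (𝓝 0) := by
    have : Tendsto (fun μ : ℂ => ‖μ - rq M N P x‖) (𝓝 (rq M N P x))
        (𝓝 (‖rq M N P x - rq M N P x‖)) := by
      exact (continuous_norm.comp (continuous_id.sub continuous_const)).tendsto _
    simpa using this.mono_left nhdsWithin_le_nhds
  -- bounds
  have hbound : ∀ μ ∈ ({rq M N P x}ᶜ : Set ℂ),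
      t μ - ‖μ - rq M N P x‖
        ≤ ‖qf M N P x μ - rq M N P x‖ ∧
      ‖qf M N P x μ - rq M N P x‖
        ≤ t μ + ‖μ - rq M N P x‖ := by
    intro μ hμ
    have hμne : μ ≠ rq M N P x := hμ
    set c := innerP P ((M - μ • N).mulVec x) v with hcdef
    have hc0 : c ≠ 0 := by
      rw [hcdef, hc]
      exact mul_ne_zero (sub_ne_zero.mpr (Ne.symm hμne)) hd
    set u : ℂ := c / (‖c‖ : ℂ) with hu
    have hu1 : ‖u‖ = 1 := by
      rw [hu, norm_div, Complex.norm_real, norm_norm,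
        div_self (norm_ne_zero_iff.mpr hc0)]
    have hqf : qf M N P x μ - rq M N P x = u * (t μ : ℂ) + (μ - rq M N P x) := by
      show (c / (‖c‖ : ℂ)) *
          ((normP P ((M - μ • N).mulVec x) / normP P v : ℝ) : ℂ) + μ - rq M N P x
        = u * (t μ : ℂ) + (μ - rq M N P x)
      rw [hsub]
      ring
    have habsu : ‖u * (t μ : ℂ)‖ = t μ := by
      rw [norm_mul, hu1, one_mul, Complex.norm_real, Real.norm_eq_abs, abs_of_nonneg (htnn μ)]
    constructor
    · have : t μ ≤ ‖qf M N P x μ - rq M N P x‖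
          + ‖μ - rq M N P x‖ := by
        calc t μ = ‖(qf M N P x μ - rq M N P x) - (μ - rq M N P x)‖ := by
              rw [hqf]; simp [habsu, hu1, abs_of_nonneg (htnn μ)]
          _ ≤ _ := norm_sub_le _ _
      linarith
    · calc ‖qf M N P x μ - rq M N P x‖
          ≤ ‖u * (t μ : ℂ)‖ + ‖μ - rq M N P x‖ := by
            rw [hqf]; exact norm_add_le _ _
        _ = t μ + ‖μ - rq M N P x‖ := by rw [habsu]
  have hmem : ∀ᶠ μ in 𝓝[≠] (rq M N P x), μ ∈ ({rq M N P x}ᶜ : Set ℂ) :=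
    eventually_mem_nhdsWithin
  refine tendsto_of_tendsto_of_tendsto_of_le_of_le'
    (f := fun μ => ‖qf M N P x μ - rq M N P x‖)
    (g := fun μ => t μ - ‖μ - rq M N P x‖)
    (h := fun μ => t μ + ‖μ - rq M N P x‖) ?_ ?_ ?_ ?_
  · simpa using htend.sub habs
  · simpa using htend.add habs
  · exact hmem.mono fun μ hμ => (hbound μ hμ).1
  · exact hmem.mono fun μ hμ => (hbound μ hμ).2
end

section
/- Assume the eigenvalue problem Mx = λNx is normal with respect to ⟨·,·⟩_P and that Λ(M,N) is nonempty. Then for every μ ∈ ℂ and every x ∈ ℂ^n with Nx ≠ 0, one has dist(μ, Λ(M,N))² ≤ |rq_{M,N}(x) − μ|² + ‖Mx‖_P²/‖Nx‖_P² − |rq_{M,N}(x)|². -/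
set_option maxHeartbeats 1600000


open Matrix Filter Topology
open scoped ComplexOrder

namespace Aux5

open ContinuousLinearMap
open scoped InnerProductSpace

variable {n : ℕ}

theorem coreCLM (T : EuclideanSpace ℂ (Fin n) →L[ℂ] EuclideanSpace ℂ (Fin n)) (hT : IsStarNormal T)
    (c : ℂ) (d : ℝ) (hd : 0 ≤ d)
    (hspec : ∀ z ∈ spectrum ℂ T, d * ‖z‖ ≤ ‖1 + c * z‖)
    (y : EuclideanSpace ℂ (Fin n)) :
    d * ‖T y‖ ≤ ‖y + c • T y‖ := by
  set f : ℂ → ℂ := fun z => star (1 + c * z) * (1 + c * z) - ((d : ℂ)^2) * (star z * z) with hf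
  have hcfc : cfc f T = star (1 + c • T) * (1 + c • T) - ((d : ℂ)^2) • (star T * T) := by
    rw [hf]
    rw [cfc_sub _ _ T (by fun_prop) (by fun_prop)]
    rw [cfc_mul _ _ T (by fun_prop) (by fun_prop)]
    rw [cfc_star (fun z => 1 + c * z) T]
    rw [cfc_const_mul _ _ T (by fun_prop)]
    rw [cfc_mul _ _ T (by fun_prop) (by fun_prop)]
    rw [cfc_star_id (a := T)]
    rw [cfc_id' ℂ T]
    have : cfc (fun z : ℂ => 1 + c * z) T = 1 + c • T := by
      rw [cfc_const_add 1 (fun z : ℂ => c * z) T (by fun_prop)]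
      rw [cfc_const_mul_id c T]
      simp [Algebra.algebraMap_eq_smul_one]
    rw [this]
  have hposf : ∀ z ∈ spectrum ℂ T, 0 ≤ f z := by
    intro z hz
    have h := hspec z hz
    have habs : ∀ w : ℂ, star w * w = ((‖w‖ ^ 2 : ℝ) : ℂ) := by
      intro w
      rw [Complex.star_def, mul_comm, Complex.mul_conj, Complex.sq_norm]
    have : f z = (((‖1 + c*z‖)^2 - d^2 * (‖z‖)^2 : ℝ) : ℂ) := by
      rw [hf]
      simp only [habs]
      push_cast
      ring
    rw [this, Complex.zero_le_real]
    nlinarith [norm_nonneg z, norm_nonneg (1 + c*z),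
      mul_nonneg hd (norm_nonneg z)]
  have hpos : (0 : _) ≤ cfc f T := cfc_nonneg hposf
  rw [hcfc] at hpos
  have hPp : (star (1 + c • T) * (1 + c • T) - ((d : ℂ)^2) • (star T * T)).IsPositive :=
    (nonneg_iff_isPositive _).mp hpos
  have h2 := hPp.re_inner_nonneg_left y
  have hre : RCLike.re ⟪(star (1 + c • T) * (1 + c • T) - ((d : ℂ)^2) • (star T * T)) y, y⟫_ℂ
      = ‖(1 + c • T) y‖^2 - d^2 * ‖T y‖^2 := by
    rw [ContinuousLinearMap.sub_apply, ContinuousLinearMap.smul_apply,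
      ContinuousLinearMap.mul_apply, ContinuousLinearMap.mul_apply,
      inner_sub_left, inner_smul_left, star_eq_adjoint, star_eq_adjoint,
      adjoint_inner_left, adjoint_inner_left]
    have hcs : (starRingEnd ℂ) ((d:ℂ)^2) = ((d^2 : ℝ) : ℂ) := by
      rw [map_pow, Complex.conj_ofReal]; push_cast; ring
    rw [hcs, map_sub, inner_self_eq_norm_sq]
    congr 1
    rw [show ((d^2:ℝ):ℂ) * ⟪T y, T y⟫_ℂ = (d^2:ℝ) • ⟪T y, T y⟫_ℂ from
      (RCLike.real_smul_eq_coe_mul _ _).symm, RCLike.smul_re, inner_self_eq_norm_sq]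
  rw [hre] at h2
  have hGy : (1 + c • T) y = y + c • T y := by simp
  rw [hGy] at h2
  nlinarith [norm_nonneg (T y), norm_nonneg (y + c • T y), mul_nonneg hd (norm_nonneg (T y))]

theorem normE_sq (u : Fin n → ℂ) :
    ‖(WithLp.equiv 2 (Fin n → ℂ)).symm u‖ ^ 2 = (star u ⬝ᵥ u).re := by
  rw [EuclideanSpace.norm_eq, Real.sq_sqrt (by positivity), dotProduct, Complex.re_sum]
  refine Finset.sum_congr rfl fun i _ => ?_
  have h2 : (star u) i * u i = ((Complex.normSq (u i) : ℝ) : ℂ) := by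
    simp [Pi.star_apply, Complex.star_def, mul_comm, Complex.mul_conj]
  rw [h2, Complex.ofReal_re, ← Complex.sq_norm]
  have h1 : ((WithLp.equiv 2 (Fin n → ℂ)).symm u) i = u i := rfl
  rw [h1]

theorem normE_eq (u : Fin n → ℂ) :
    ‖(WithLp.equiv 2 (Fin n → ℂ)).symm u‖ = Real.sqrt ((star u ⬝ᵥ u).re) := by
  rw [← normE_sq u, Real.sqrt_sq (norm_nonneg _)]

theorem coreMat (C : Matrix (Fin n) (Fin n) ℂ) (hC : C * Cᴴ = Cᴴ * C)
    (c : ℂ) (d : ℝ) (hd : 0 ≤ d)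
    (hspec : ∀ z ∈ spectrum ℂ C, d * ‖z‖ ≤ ‖1 + c * z‖)
    (v : Fin n → ℂ) :
    d * Real.sqrt ((star (C *ᵥ v) ⬝ᵥ (C *ᵥ v)).re) ≤
      Real.sqrt ((star (v + c • (C *ᵥ v)) ⬝ᵥ (v + c • (C *ᵥ v))).re) := by
  set T := Matrix.toEuclideanCLM (𝕜 := ℂ) C with hT
  have hTn : IsStarNormal T := by
    constructor
    rw [commute_iff_eq, hT, ← map_star, ← _root_.map_mul, ← _root_.map_mul]
    congr 1
    simpa [Matrix.star_eq_conjTranspose] using hC.symm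
  have hsp : spectrum ℂ T = spectrum ℂ C := AlgEquiv.spectrum_eq (Matrix.toEuclideanCLM (𝕜 := ℂ)) C
  have key := coreCLM T hTn c d hd (fun z hz => hspec z (hsp ▸ hz))
    ((WithLp.equiv 2 (Fin n → ℂ)).symm v)
  have hTv : T ((WithLp.equiv 2 (Fin n → ℂ)).symm v) =
      (WithLp.equiv 2 (Fin n → ℂ)).symm (C *ᵥ v) := Matrix.toEuclideanCLM_toLp C v
  rw [hTv] at key
  have hadd : (WithLp.equiv 2 (Fin n → ℂ)).symm v + c • (WithLp.equiv 2 (Fin n → ℂ)).symm (C *ᵥ v)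
      = (WithLp.equiv 2 (Fin n → ℂ)).symm (v + c • (C *ᵥ v)) := by simp
  rw [hadd, normE_eq, normE_eq] at key
  exact key

end Aux5

/-- in normal eigenvalue problems, a bound on the distance from `μ` to the
generalized spectrum. -/
theorem stmt_5 {n : ℕ} (hn : 1 ≤ n) (M N P : Matrix (Fin n) (Fin n) ℂ)
    (hP : P.PosDef)
    (hnormal : ∃ μ₀ : ℂ, μ₀ ≠ 0 ∧ IsUnit (M - μ₀ • N) ∧
      (M * (M - μ₀ • N)⁻¹) * (P⁻¹ * (M * (M - μ₀ • N)⁻¹)ᴴ * P) =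
        (P⁻¹ * (M * (M - μ₀ • N)⁻¹)ᴴ * P) * (M * (M - μ₀ • N)⁻¹))
    (hspec : (genSpec M N).Nonempty)
    (μ : ℂ) (x : Fin n → ℂ) (hx : N.mulVec x ≠ 0) :
    (Metric.infDist μ (genSpec M N)) ^ 2 ≤
      (‖rq M N P x - μ‖) ^ 2 +
        (normP P (M.mulVec x)) ^ 2 / (normP P (N.mulVec x)) ^ 2 -
        (‖rq M N P x‖) ^ 2 := by
  classical
  obtain ⟨μ₀, hμ₀, hSu, hA⟩ := hnormal
  set S : Matrix (Fin n) (Fin n) ℂ := M - μ₀ • N with hSdef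
  set A : Matrix (Fin n) (Fin n) ℂ := M * S⁻¹ with hAdef
  set Q : Matrix (Fin n) (Fin n) ℂ := N * S⁻¹ with hQdef
  have hSdet : IsUnit S.det := (Matrix.isUnit_iff_isUnit_det _).mp hSu
  have hSS : S * S⁻¹ = 1 := Matrix.mul_nonsing_inv _ hSdet
  have hS'S : S⁻¹ * S = 1 := Matrix.nonsing_inv_mul _ hSdet
  open MatrixOrder in set W : Matrix (Fin n) (Fin n) ℂ := CFC.sqrt P with hWdef
  have hWherm : Wᴴ = W := open MatrixOrder in (Matrix.nonneg_iff_posSemidef.mp (CFC.sqrt_nonneg P)).1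
  have hWW : W * W = P := open MatrixOrder in CFC.sqrt_mul_sqrt_self P (Matrix.nonneg_iff_posSemidef.mpr hP.posSemidef)
  have hPdet : IsUnit P.det := (Matrix.isUnit_iff_isUnit_det _).mp hP.isUnit
  have hWdet : IsUnit W.det := by
    have h : W.det * W.det = P.det := by rw [← Matrix.det_mul, hWW]
    exact isUnit_of_mul_isUnit_left (h ▸ hPdet)
  have hWW' : W * W⁻¹ = 1 := Matrix.mul_nonsing_inv _ hWdet
  have hW'W : W⁻¹ * W = 1 := Matrix.nonsing_inv_mul _ hWdet
  have hPinv : P⁻¹ = W⁻¹ * W⁻¹ := by rw [← hWW, Matrix.mul_inv_rev]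
  have cWl : ∀ X : Matrix (Fin n) (Fin n) ℂ, W * (W⁻¹ * X) = X := fun X => by
    rw [← Matrix.mul_assoc, hWW', one_mul]
  have cWr : ∀ X : Matrix (Fin n) (Fin n) ℂ, W⁻¹ * (W * X) = X := fun X => by
    rw [← Matrix.mul_assoc, hW'W, one_mul]
  -- normality of Q with respect to P
  have hQA : Q = μ₀⁻¹ • (A - 1) := by
    have hN : N = μ₀⁻¹ • (M - S) := by
      rw [hSdef]; rw [sub_sub_cancel, smul_smul, inv_mul_cancel₀ hμ₀, one_smul]
    rw [hQdef, hN, Matrix.smul_mul, Matrix.sub_mul, hSS, hAdef]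
  have hQnormal : Q * (P⁻¹ * Qᴴ * P) = (P⁻¹ * Qᴴ * P) * Q := by
    have hQH : Qᴴ = (starRingEnd ℂ) μ₀⁻¹ • (Aᴴ - 1) := by
      rw [hQA]; simp [Matrix.conjTranspose_smul, Matrix.conjTranspose_sub]
    have hPP' : P⁻¹ * P = 1 := Matrix.nonsing_inv_mul _ hPdet
    have hG : P⁻¹ * (Aᴴ - 1) * P = P⁻¹ * Aᴴ * P - 1 := by
      rw [Matrix.mul_sub, Matrix.sub_mul, Matrix.mul_one, hPP']
    have expand : ∀ X Y : Matrix (Fin n) (Fin n) ℂ, (X - 1) * (Y - 1) = X * Y - X - Y + 1 := by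
      intro X Y; noncomm_ring
    rw [hQH, hQA]
    simp only [Matrix.smul_mul, Matrix.mul_smul, smul_smul]
    rw [mul_comm (μ₀⁻¹) ((starRingEnd ℂ) μ₀⁻¹)]
    congr 1
    have h1 : (A - 1) * (P⁻¹ * ((Aᴴ - 1) * P)) = (A - 1) * (P⁻¹ * Aᴴ * P - 1) := by
      rw [← Matrix.mul_assoc P⁻¹ _ P, hG]
    have h2 : P⁻¹ * ((Aᴴ - 1) * (P * (A - 1))) = (P⁻¹ * Aᴴ * P - 1) * (A - 1) := by
      rw [← Matrix.mul_assoc (Aᴴ - 1) P (A - 1), ← Matrix.mul_assoc P⁻¹ _ _, ← Matrix.mul_assoc P⁻¹ (Aᴴ - 1) P, hG]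
    rw [Matrix.mul_assoc, Matrix.mul_assoc, Matrix.mul_assoc, h1, h2]
    rw [expand, expand, hA]
    abel
  set C : Matrix (Fin n) (Fin n) ℂ := W * Q * W⁻¹ with hCdef
  have hCherm : Cᴴ = W⁻¹ * Qᴴ * W := by
    rw [hCdef]
    simp [Matrix.conjTranspose_mul, Matrix.conjTranspose_nonsing_inv, hWherm, Matrix.mul_assoc]
  have hCnorm : C * Cᴴ = Cᴴ * C := by
    have e1 : C * Cᴴ = W * (Q * (P⁻¹ * Qᴴ * P)) * W⁻¹ := by
      rw [hCherm, hCdef, hPinv, ← hWW]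
      simp only [Matrix.mul_assoc, hWW', hW'W, Matrix.mul_one, cWl, cWr]
    have e2 : Cᴴ * C = W * ((P⁻¹ * Qᴴ * P) * Q) * W⁻¹ := by
      rw [hCherm, hCdef, hPinv, ← hWW]
      simp only [Matrix.mul_assoc, hWW', hW'W, Matrix.mul_one, cWl, cWr]
    rw [e1, e2, hQnormal]
  set d : ℝ := Metric.infDist μ (genSpec M N) with hddef
  have hd : 0 ≤ d := Metric.infDist_nonneg
  have hspecC : ∀ z ∈ spectrum ℂ C, d * ‖z‖ ≤ ‖1 + (μ₀ - μ) * z‖ := by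
    intro z hz
    rw [spectrum.mem_iff] at hz
    have hdetz : (z • (1 : Matrix (Fin n) (Fin n) ℂ) - C).det = 0 := by
      by_contra h
      exact hz (by
        rw [Algebra.algebraMap_eq_smul_one]
        exact (Matrix.isUnit_iff_isUnit_det _).mpr (isUnit_iff_ne_zero.mpr h))
    have hzC : z • (1 : Matrix (Fin n) (Fin n) ℂ) - C = W * ((z • S - N) * S⁻¹) * W⁻¹ := by
      have h3 : (z • S - N) * S⁻¹ = z • (1 : Matrix (Fin n) (Fin n) ℂ) - Q := by
        rw [Matrix.sub_mul, Matrix.smul_mul, hSS, hQdef]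
      rw [h3, Matrix.mul_sub, Matrix.sub_mul, hCdef]
      congr 1
      rw [Matrix.mul_smul, Matrix.smul_mul, Matrix.mul_one, hWW']
    have hW0 : W.det ≠ 0 := hWdet.ne_zero
    have hS0 : S.det ≠ 0 := hSdet.ne_zero
    have hdet2 : (z • S - N).det = 0 := by
      have h4 := hdetz
      rw [hzC, Matrix.det_mul, Matrix.det_mul, Matrix.det_mul, Matrix.det_nonsing_inv] at h4
      rcases mul_eq_zero.mp h4 with h5 | h5
      · rcases mul_eq_zero.mp h5 with h6 | h6
        · exact absurd h6 hW0
        · rcases mul_eq_zero.mp h6 with h7 | h7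
          · exact h7
          · exact absurd h7 (by simp [Ring.inverse_eq_inv', hS0])
      · exact absurd h5 (by
          rw [Matrix.det_nonsing_inv] at h5
          simp [Ring.inverse_eq_inv', hW0] at h5)
    by_cases hz0 : z = 0
    · simp [hz0]
    · set lam : ℂ := μ₀ + z⁻¹ with hlam
      have hmem : lam ∈ genSpec M N := by
        show (M - lam • N).det = 0
        have hzl : z * lam = z * μ₀ + 1 := by
          rw [hlam, mul_add, mul_inv_cancel₀ hz0]
        have hfactor : z • S - N = z • (M - lam • N) := by
          rw [hSdef, smul_sub, smul_sub, smul_smul, smul_smul, hzl, add_smul, one_smul, sub_sub]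
        have h8 := hdet2
        rw [hfactor, Matrix.det_smul] at h8
        rcases mul_eq_zero.mp h8 with h9 | h9
        · exact absurd h9 (pow_ne_zero _ hz0)
        · exact h9
      have hdle : d ≤ ‖μ - lam‖ := by
        have h10 := Metric.infDist_le_dist_of_mem (x := μ) hmem
        rwa [Complex.dist_eq] at h10
      calc d * ‖z‖ ≤ ‖μ - lam‖ * ‖z‖ :=
            mul_le_mul_of_nonneg_right hdle (norm_nonneg z)
        _ = ‖(μ - lam) * z‖ := (norm_mul _ _).symm
        _ = ‖1 + (μ₀ - μ) * z‖ := by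
            rw [show (μ - lam) * z = -(1 + (μ₀ - μ) * z) by
              rw [hlam, sub_mul, add_mul, inv_mul_cancel₀ hz0]; ring]
            exact norm_neg _
  have key := Aux5.coreMat C hCnorm (μ₀ - μ) d hd hspecC (W *ᵥ (S *ᵥ x))
  -- vector identities
  have h1 : C *ᵥ (W *ᵥ (S *ᵥ x)) = W *ᵥ (N *ᵥ x) := by
    rw [Matrix.mulVec_mulVec, Matrix.mulVec_mulVec, Matrix.mulVec_mulVec]
    congr 1
    rw [hCdef, hQdef]
    simp only [Matrix.mul_assoc, cWl, cWr, hS'S, Matrix.mul_one]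
  have h2 : W *ᵥ (S *ᵥ x) + (μ₀ - μ) • (W *ᵥ (N *ᵥ x)) = W *ᵥ ((M - μ • N) *ᵥ x) := by
    rw [Matrix.mulVec_mulVec, Matrix.mulVec_mulVec, Matrix.mulVec_mulVec,
      ← Matrix.smul_mulVec, ← Matrix.add_mulVec]
    congr 1
    rw [hSdef, Matrix.mul_sub, Matrix.mul_sub, Matrix.mul_smul, Matrix.mul_smul, sub_smul]
    abel
  rw [h1, h2] at key
  -- inner product translation
  have hPtrans : ∀ u : Fin n → ℂ, star (W *ᵥ u) ⬝ᵥ (W *ᵥ u) = innerP P u u := by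
    intro u
    rw [Matrix.star_mulVec, hWherm, ← Matrix.dotProduct_mulVec, Matrix.mulVec_mulVec, hWW]
    rfl
  rw [hPtrans, hPtrans] at key
  -- key : d * √((innerP P (N*ᵥx) _).re) ≤ √((innerP P ((M-μ•N)*ᵥx) _).re)
  set u : Fin n → ℂ := M *ᵥ x with hu
  set w : Fin n → ℂ := N *ᵥ x with hw
  set v2 : Fin n → ℂ := (M - μ • N) *ᵥ x with hv2def
  set a : ℂ := innerP P u w with ha
  set b : ℂ := innerP P w w with hb
  set mm : ℂ := innerP P u u with hmm
  have hbpos : (0 : ℂ) < b := hP.dotProduct_mulVec_pos hx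
  have hbre : 0 < b.re := by
    have := Complex.lt_def.mp hbpos
    simpa using this.1
  have hbim : b.im = 0 := by
    have := Complex.lt_def.mp hbpos
    simpa using this.2.symm
  have hbeq : b = ((b.re : ℝ) : ℂ) := Complex.ext (by simp) (by simp [hbim])
  have hrpos : 0 ≤ (innerP P v2 v2).re := by
    have := Complex.le_def.mp (hP.posSemidef.dotProduct_mulVec_nonneg v2)
    exact this.1
  have hmpos : 0 ≤ mm.re := by
    have := Complex.le_def.mp (hP.posSemidef.dotProduct_mulVec_nonneg u)
    exact this.1
  have hsymmP : ∀ u1 w1 : Fin n → ℂ, star u1 ⬝ᵥ (P *ᵥ w1) = star (star w1 ⬝ᵥ (P *ᵥ u1)) := by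
    intro u1 w1
    rw [Matrix.star_dotProduct, Matrix.star_mulVec, hP.1, ← Matrix.dotProduct_mulVec]
  have hv2 : v2 = u - μ • w := by
    rw [hv2def, Matrix.sub_mulVec, Matrix.smul_mulVec]
  have hexp : innerP P v2 v2 = mm - star μ * a - μ * star a + (μ * star μ) * b := by
    rw [hv2]
    show star (u - μ • w) ⬝ᵥ (P *ᵥ (u - μ • w)) = _
    rw [star_sub, star_smul, Matrix.mulVec_sub, Matrix.mulVec_smul]
    rw [sub_dotProduct, dotProduct_sub, dotProduct_sub,
      smul_dotProduct, dotProduct_smul, dotProduct_smul,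
      smul_dotProduct]
    have e1 : star u ⬝ᵥ (P *ᵥ w) = star a := hsymmP u w
    have e2 : star w ⬝ᵥ (P *ᵥ u) = a := rfl
    have e3 : star u ⬝ᵥ (P *ᵥ u) = mm := rfl
    have e4 : star w ⬝ᵥ (P *ᵥ w) = b := rfl
    rw [e1, e2, e3, e4]
    simp only [smul_eq_mul]
    ring
  -- squares of the normP quantities
  have hNP2 : normP P w ^ 2 = b.re := Real.sq_sqrt hbre.le
  have hRP2 : normP P v2 ^ 2 = (innerP P v2 v2).re := Real.sq_sqrt hrpos
  have hMM2 : normP P u ^ 2 = mm.re := Real.sq_sqrt hmpos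
  have hkey' : d * normP P w ≤ normP P v2 := key
  have hsq : d ^ 2 * b.re ≤ (innerP P v2 v2).re := by
    have h12 : (d * normP P w) ^ 2 ≤ (normP P v2) ^ 2 :=
      pow_le_pow_left₀ (mul_nonneg hd (Real.sqrt_nonneg _)) hkey' 2
    rw [mul_pow, hNP2, hRP2] at h12
    exact h12
  have hrq : rq M N P x = a / b := rfl
  rw [hrq, hNP2, hMM2]
  have hmain : ‖a / b - μ‖ ^ 2 + mm.re / b.re - ‖a / b‖ ^ 2
      = (innerP P v2 v2).re / b.re := by
    rw [hexp, hbeq]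
    simp only [Complex.sq_norm, Complex.normSq_apply, Complex.sub_re, Complex.sub_im,
      Complex.div_ofReal_re, Complex.div_ofReal_im, Complex.add_re, Complex.add_im,
      Complex.mul_re, Complex.mul_im, Complex.star_def, Complex.conj_re, Complex.conj_im,
      Complex.ofReal_re, Complex.ofReal_im]
    field_simp
    ring
  rw [hmain, le_div_iff₀ hbre]
  exact hsq
end

section
/- Assume the eigenvalue problem Mx = λNx is normal with respect to ⟨·,·⟩_P and that Λ(M,N) is nonempty. Then for every x ∈ ℂ^n with Nx ≠ 0 there exists an eigenvalue λ ∈ Λ(M,N) with |λ − rq_{M,N}(x)| ≤ r₀(x); that is, the closed disc of radius r₀(x) centred at rq_{M,N}(x) (the closure of the image of the quotient function) contains an eigenvalue. -/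
open Matrix Filter Topology
open scoped ComplexOrder InnerProductSpace

section aux
lemma WithLp.equiv_symm_smul {p : ENNReal} {K V : Type*} [SMul K V] (c : K) (x : V) :
    (WithLp.equiv p V).symm (c • x) = c • (WithLp.equiv p V).symm x := rfl

lemma WithLp.equiv_smul {p : ENNReal} {K V : Type*} [SMul K V] (c : K) (x : WithLp p V) :
    WithLp.equiv p V (c • x) = c • WithLp.equiv p V x := rfl

lemma WithLp.equiv_symm_sub {p : ENNReal} {V : Type*} [AddCommGroup V] (x y : V) :
    (WithLp.equiv p V).symm (x - y) = (WithLp.equiv p V).symm x - (WithLp.equiv p V).symm y :=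
  rfl

lemma EuclideanSpace.inner_piLp_equiv_symm {n : ℕ} (x y : Fin n → ℂ) :
    ⟪(WithLp.equiv 2 (Fin n → ℂ)).symm x, (WithLp.equiv 2 (Fin n → ℂ)).symm y⟫_ℂ =
      star x ⬝ᵥ y := by
  rw [dotProduct_comm]; rfl

lemma Matrix.toEuclideanLin_apply_piLp_equiv_symm {n : ℕ} (C : Matrix (Fin n) (Fin n) ℂ)
    (z : Fin n → ℂ) :
    Matrix.toEuclideanLin C ((WithLp.equiv 2 (Fin n → ℂ)).symm z) =
      (WithLp.equiv 2 (Fin n → ℂ)).symm (C *ᵥ z) := rfl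

lemma Matrix.piLp_equiv_toEuclideanLin_apply {n : ℕ} (C : Matrix (Fin n) (Fin n) ℂ)
    (z : EuclideanSpace ℂ (Fin n)) :
    WithLp.equiv 2 (Fin n → ℂ) (Matrix.toEuclideanLin C z) =
      C *ᵥ WithLp.equiv 2 (Fin n → ℂ) z := rfl

lemma aux_min {ι : Type*} (s : Finset ι) (a b : ι → ℝ)
    (ha : ∀ i ∈ s, 0 ≤ a i) (hb : ∀ i ∈ s, 0 ≤ b i) (hbpos : ∃ i ∈ s, b i ≠ 0) :
    ∃ i ∈ s, b i ≠ 0 ∧ a i * (∑ j ∈ s, b j) ≤ (∑ j ∈ s, a j) * b i := by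
  by_contra hcon
  push_neg at hcon
  obtain ⟨i₀, hi₀, hbi₀⟩ := hbpos
  have key : ∀ i ∈ s, (∑ j ∈ s, a j) * b i ≤ a i * (∑ j ∈ s, b j) := by
    intro i hi
    rcases eq_or_ne (b i) 0 with h | h
    · rw [h, mul_zero]
      exact mul_nonneg (ha i hi) (Finset.sum_nonneg hb)
    · exact (hcon i hi h).le
  have strict : (∑ j ∈ s, a j) * b i₀ < a i₀ * (∑ j ∈ s, b j) := hcon i₀ hi₀ hbi₀
  have := Finset.sum_lt_sum key ⟨i₀, hi₀, strict⟩
  rw [← Finset.mul_sum, ← Finset.sum_mul] at this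
  rw [mul_comm] at this
  exact lt_irrefl _ this

lemma norm_sum_sq {n : ℕ} {ι : Type*} (s : Finset ι) (v : ι → EuclideanSpace ℂ (Fin n))
    (h : ∀ i ∈ s, ∀ j ∈ s, i ≠ j → ⟪v i, v j⟫_ℂ = 0) :
    ‖∑ i ∈ s, v i‖ ^ 2 = ∑ i ∈ s, ‖v i‖ ^ 2 := by
  have key : ⟪∑ i ∈ s, v i, ∑ j ∈ s, v j⟫_ℂ = ∑ i ∈ s, (‖v i‖ : ℂ) ^ 2 := by
    rw [sum_inner]
    refine Finset.sum_congr rfl fun i hi => ?_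
    rw [inner_sum, Finset.sum_eq_single i (fun j hj hne => h i hi j hj (Ne.symm hne))
      (fun hni => absurd hi hni)]
    exact inner_self_eq_norm_sq_to_K (v i)
  have h2 := congrArg (RCLike.re (K := ℂ)) key
  rw [inner_self_eq_norm_sq] at h2
  rw [h2, map_sum]
  refine Finset.sum_congr rfl fun i hi => ?_
  rw [← Complex.ofReal_pow]; exact RCLike.ofReal_re _

lemma normal_decomp {n : ℕ} (f : EuclideanSpace ℂ (Fin n) →ₗ[ℂ] EuclideanSpace ℂ (Fin n))
    (hf : f * LinearMap.adjoint f = LinearMap.adjoint f * f) (w : EuclideanSpace ℂ (Fin n)) :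
    ∃ (t : Finset (ℂ × ℂ)) (v : ℂ × ℂ → EuclideanSpace ℂ (Fin n)) (α : ℂ × ℂ → ℂ),
      w = ∑ j ∈ t, v j ∧ (∀ j, f (v j) = α j • v j) ∧
      (∀ j ∈ t, ∀ k ∈ t, j ≠ k → ⟪v j, v k⟫_ℂ = 0) := by
  classical
  set g := LinearMap.adjoint f with hg
  set H := f + g with hH
  set K := Complex.I • (f - g) with hK
  have hsf : star f = g := hg ▸ (LinearMap.star_eq_adjoint f)
  have hsg : star g = f := by rw [hg, LinearMap.star_eq_adjoint, LinearMap.adjoint_adjoint]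
  have hHsym : H.IsSymmetric := by
    rw [LinearMap.isSymmetric_iff_isSelfAdjoint]
    show star H = H
    rw [hH, star_add, hsf, hsg, add_comm]
  have hKsym : K.IsSymmetric := by
    rw [LinearMap.isSymmetric_iff_isSelfAdjoint]
    show star K = K
    rw [hK, star_smul, star_sub, hsf, hsg, Complex.star_def, Complex.conj_I, neg_smul,
      ← smul_neg, neg_sub]
  have e1 : (f + g) * (f - g) = f * f - g * g := by
    rw [add_mul, mul_sub, mul_sub, hf]; abel
  have e2 : (f - g) * (f + g) = f * f - g * g := by
    rw [sub_mul, mul_add, mul_add, hf]; abel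
  have hHK : Commute H K := by
    unfold Commute SemiconjBy
    rw [hH, hK, mul_smul_comm, smul_mul_assoc, e1, e2]
  have internal := LinearMap.IsSymmetric.directSum_isInternal_of_commute hHsym hKsym hHK
  obtain ⟨d, hd⟩ := internal.surjective w
  refine ⟨d.support, fun j => ↑(d j), fun j => (j.2 - Complex.I * j.1) / 2, ?_, ?_, ?_⟩
  · rw [← hd, DirectSum.coeAddMonoidHom_eq_dfinsuppSum]
    rfl
  · intro j
    show f ↑(d j) = ((j.2 - Complex.I * j.1) / 2) • (d j : EuclideanSpace ℂ (Fin n))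
    obtain ⟨h1, h2⟩ := (d j).2
    rw [SetLike.mem_coe, Module.End.mem_eigenspace_iff] at h1 h2
    have h2' : f ↑(d j) - g ↑(d j) = (-Complex.I * j.1) • (d j : EuclideanSpace ℂ (Fin n)) := by
      have := congrArg (fun z => (-Complex.I) • z) h2
      simp only [hK, LinearMap.smul_apply, LinearMap.sub_apply, smul_smul] at this
      rw [show (-Complex.I * Complex.I) = 1 by simp [Complex.I_mul_I], one_smul] at this
      rw [this]
    have h1' : f ↑(d j) + g ↑(d j) = j.2 • (d j : EuclideanSpace ℂ (Fin n)) := by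
      simpa [hH] using h1
    have h2f : (2 : ℂ) • f ↑(d j) = (j.2 - Complex.I * j.1) • (d j : EuclideanSpace ℂ (Fin n)) := by
      rw [two_smul]
      calc f ↑(d j) + f ↑(d j) = (f ↑(d j) + g ↑(d j)) + (f ↑(d j) - g ↑(d j)) := by abel
      _ = j.2 • ↑(d j) + (-Complex.I * j.1) • (d j : EuclideanSpace ℂ (Fin n)) := by
          rw [h1', h2']
      _ = (j.2 - Complex.I * j.1) • (d j : EuclideanSpace ℂ (Fin n)) := by
          rw [← add_smul]; ring_nf
    have := congrArg (fun z => (2⁻¹ : ℂ) • z) h2f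
    simp only [smul_smul] at this
    rw [show (2⁻¹ : ℂ) * 2 = 1 by norm_num, one_smul] at this
    rw [this]
    congr 1
    ring
  · intro j hj k hk hne
    have horth := LinearMap.IsSymmetric.orthogonalFamily_eigenspace_inf_eigenspace hHsym hKsym
    exact horth hne (d j) (d k)

end aux

/-- in normal eigenvalue problems the closed disc of radius `r0 x` centred
at the Rayleigh quotient contains an eigenvalue. -/
theorem stmt_6 {n : ℕ} (hn : 1 ≤ n) (M N P : Matrix (Fin n) (Fin n) ℂ)
    (hP : P.PosDef)
    (hnormal : ∃ μ₀ : ℂ, μ₀ ≠ 0 ∧ IsUnit (M - μ₀ • N) ∧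
      (M * (M - μ₀ • N)⁻¹) * (P⁻¹ * (M * (M - μ₀ • N)⁻¹)ᴴ * P) =
        (P⁻¹ * (M * (M - μ₀ • N)⁻¹)ᴴ * P) * (M * (M - μ₀ • N)⁻¹))
    (hspec : (genSpec M N).Nonempty)
    (x : Fin n → ℂ) (hx : N.mulVec x ≠ 0) :
    ∃ l ∈ genSpec M N, ‖l - rq M N P x‖ ≤ r0 M N P x := by
  classical
  obtain ⟨μ₀, hμ₀, hS, hcomm⟩ := hnormal
  set S : Matrix (Fin n) (Fin n) ℂ := M - μ₀ • N with hSdef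
  set A : Matrix (Fin n) (Fin n) ℂ := M * S⁻¹ with hAdef
  open scoped MatrixOrder in
  set Q : Matrix (Fin n) (Fin n) ℂ := CFC.sqrt P with hQdef
  open scoped MatrixOrder in
  have hQherm : Qᴴ = Q := (CFC.sqrt_nonneg P).posSemidef.1
  open scoped MatrixOrder in
  have hQQ : Q * Q = P := CFC.sqrt_mul_sqrt_self P hP.posSemidef.nonneg
  have hPdet : P.det ≠ 0 := hP.det_pos.ne'
  have hQdet : Q.det ≠ 0 := by
    intro h
    apply hPdet
    rw [← hQQ, Matrix.det_mul, h, mul_zero]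
  have hQ1 : Q * Q⁻¹ = 1 := Matrix.mul_nonsing_inv _ hQdet.isUnit
  have hQ2 : Q⁻¹ * Q = 1 := Matrix.nonsing_inv_mul _ hQdet.isUnit
  have hQ1' : ∀ X : Matrix (Fin n) (Fin n) ℂ, Q * (Q⁻¹ * X) = X := fun X => by
    rw [← Matrix.mul_assoc, hQ1, Matrix.one_mul]
  have hQ2' : ∀ X : Matrix (Fin n) (Fin n) ℂ, Q⁻¹ * (Q * X) = X := fun X => by
    rw [← Matrix.mul_assoc, hQ2, Matrix.one_mul]
  have hSdet : S.det ≠ 0 := ((Matrix.isUnit_iff_isUnit_det S).1 hS).ne_zero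
  have hS2 : S⁻¹ * S = 1 := Matrix.nonsing_inv_mul _ hSdet.isUnit
  have hAS : A * S = M := by rw [hAdef, Matrix.mul_assoc, hS2, Matrix.mul_one]
  have hPinv : P⁻¹ = Q⁻¹ * Q⁻¹ := by rw [← hQQ, Matrix.mul_inv_rev]
  set B : Matrix (Fin n) (Fin n) ℂ := Q * A * Q⁻¹ with hBdef
  have hBH : Bᴴ = Q⁻¹ * Aᴴ * Q := by
    rw [hBdef, Matrix.conjTranspose_mul, Matrix.conjTranspose_mul,
      Matrix.conjTranspose_nonsing_inv, hQherm, Matrix.mul_assoc]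
  have hBnormal : B * Bᴴ = Bᴴ * B := by
    have key1 : B * Bᴴ = Q * (A * (P⁻¹ * Aᴴ * P)) * Q⁻¹ := by
      rw [hBH, hBdef, hPinv, ← hQQ]
      simp only [Matrix.mul_assoc, hQ1', hQ2', hQ1, hQ2, Matrix.mul_one, Matrix.one_mul]
    have key2 : Bᴴ * B = Q * ((P⁻¹ * Aᴴ * P) * A) * Q⁻¹ := by
      rw [hBH, hBdef, hPinv, ← hQQ]
      simp only [Matrix.mul_assoc, hQ1', hQ2', hQ1, hQ2, Matrix.mul_one, Matrix.one_mul]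
    rw [key1, key2, hcomm]
  set f := Matrix.toEuclideanLin B with hfdef
  have hmulLin : ∀ C D : Matrix (Fin n) (Fin n) ℂ,
      Matrix.toEuclideanLin (C * D) = Matrix.toEuclideanLin C * Matrix.toEuclideanLin D := by
    intro C D
    ext v
    simp only [Matrix.toEuclideanLin_apply, Module.End.mul_apply, Equiv.apply_symm_apply, WithLp.ofLp_toLp,
      Matrix.mulVec_mulVec]
  have hfcomm : f * LinearMap.adjoint f = LinearMap.adjoint f * f := by
    rw [hfdef, ← Matrix.toEuclideanLin_conjTranspose_eq_adjoint, ← hmulLin, ← hmulLin, hBnormal]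
  have hlin : ∀ (C : Matrix (Fin n) (Fin n) ℂ) (z : Fin n → ℂ),
      Matrix.toEuclideanLin C ((WithLp.equiv 2 (Fin n → ℂ)).symm z) =
        (WithLp.equiv 2 (Fin n → ℂ)).symm (C *ᵥ z) := fun C z =>
    Matrix.toEuclideanLin_apply_piLp_equiv_symm C z
  set y : Fin n → ℂ := S *ᵥ x with hydef
  set w : EuclideanSpace ℂ (Fin n) := (WithLp.equiv 2 (Fin n → ℂ)).symm (Q *ᵥ y) with hwdef
  set u : EuclideanSpace ℂ (Fin n) :=
    (WithLp.equiv 2 (Fin n → ℂ)).symm (Q *ᵥ (N *ᵥ x)) with hudef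
  set ρ : ℂ := rq M N P x with hρdef
  set z : EuclideanSpace ℂ (Fin n) :=
    (WithLp.equiv 2 (Fin n → ℂ)).symm (Q *ᵥ (M *ᵥ x - ρ • N *ᵥ x)) with hzdef
  have hAy : A *ᵥ y = M *ᵥ x := by rw [hydef, Matrix.mulVec_mulVec, hAS]
  have hBQ : B * Q = Q * A := by
    rw [hBdef]
    simp only [Matrix.mul_assoc, hQ2, Matrix.mul_one]
  have hMx : (WithLp.equiv 2 (Fin n → ℂ)).symm (Q *ᵥ (M *ᵥ x)) = f w := by
    have h1 : B *ᵥ (Q *ᵥ y) = Q *ᵥ (M *ᵥ x) := by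
      rw [Matrix.mulVec_mulVec, hBQ, ← Matrix.mulVec_mulVec, hAy]
    rw [hwdef, hfdef, hlin, h1]
  have hMS : μ₀ • N = M - S := by rw [hSdef]; abel
  have hNx : (μ₀ : ℂ) • u = f w - w := by
    rw [hudef, ← WithLp.equiv_symm_smul, ← Matrix.mulVec_smul, ← Matrix.smul_mulVec, hMS,
      Matrix.sub_mulVec, Matrix.mulVec_sub, WithLp.equiv_symm_sub, hMx, ← hydef, ← hwdef]
  have hzfw : z = f w - ρ • u := by
    rw [hzdef, Matrix.mulVec_sub, Matrix.mulVec_smul, WithLp.equiv_symm_sub,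
      WithLp.equiv_symm_smul, hMx, hudef]
  have hnormP : ∀ zz : Fin n → ℂ,
      normP P zz = ‖(WithLp.equiv 2 (Fin n → ℂ)).symm (Q *ᵥ zz)‖ := by
    intro zz
    have hinner : innerP P zz zz = ⟪(WithLp.equiv 2 (Fin n → ℂ)).symm (Q *ᵥ zz),
        (WithLp.equiv 2 (Fin n → ℂ)).symm (Q *ᵥ zz)⟫_ℂ := by
      rw [EuclideanSpace.inner_piLp_equiv_symm, Matrix.star_mulVec, hQherm,
        ← Matrix.dotProduct_mulVec, Matrix.mulVec_mulVec, hQQ]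
      rfl
    unfold normP
    rw [hinner, ← RCLike.re_to_complex, inner_self_eq_norm_sq, Real.sqrt_sq (norm_nonneg _)]
  have hune : u ≠ 0 := by
    intro h0
    apply hx
    have h1 : Q *ᵥ (N *ᵥ x) = 0 := by
      have := congrArg (WithLp.equiv 2 (Fin n → ℂ)) h0
      simpa [hudef] using this
    have h2 : N *ᵥ x = Q⁻¹ *ᵥ (Q *ᵥ (N *ᵥ x)) := by
      rw [Matrix.mulVec_mulVec, hQ2, Matrix.one_mulVec]
    rw [h2, h1, Matrix.mulVec_zero]
  have hnu : ‖u‖ ≠ 0 := norm_ne_zero_iff.2 hune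
  have hr0 : r0 M N P x = ‖z‖ / ‖u‖ := by
    unfold r0
    rw [hnormP, hnormP, ← hρdef, ← hzdef, ← hudef]
  -- spectral decomposition
  obtain ⟨t, v, α, hw, heig, horth⟩ := normal_decomp f hfcomm w
  have hfw : f w = ∑ j ∈ t, α j • v j := by
    rw [hw, map_sum]
    exact Finset.sum_congr rfl fun j _ => heig j
  set c : ℂ × ℂ → ℂ := fun j => μ₀⁻¹ * (α j - 1) with hcdef
  have hc : ∀ i, c i = μ₀⁻¹ * (α i - 1) := fun i => rfl
  have hu_sum : u = ∑ j ∈ t, c j • v j := by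
    have h1 : (μ₀ : ℂ) • u = ∑ j ∈ t, (α j - 1) • v j := by
      rw [hNx, hfw]
      conv_lhs => rw [hw]
      rw [← Finset.sum_sub_distrib]
      exact Finset.sum_congr rfl fun j _ => by rw [sub_smul, one_smul]
    calc u = μ₀⁻¹ • ((μ₀ : ℂ) • u) := by rw [smul_smul, inv_mul_cancel₀ hμ₀, one_smul]
    _ = ∑ j ∈ t, c j • v j := by
        rw [h1, Finset.smul_sum]
        exact Finset.sum_congr rfl fun j _ => by rw [smul_smul, ← hc j]
  have hz_sum : z = ∑ j ∈ t, (α j - ρ * c j) • v j := by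
    rw [hzfw, hfw, hu_sum, Finset.smul_sum, ← Finset.sum_sub_distrib]
    exact Finset.sum_congr rfl fun j _ => by rw [smul_smul, ← sub_smul]
  have horth' : ∀ (φ : ℂ × ℂ → ℂ), ∀ i ∈ t, ∀ j ∈ t, i ≠ j →
      ⟪φ i • v i, φ j • v j⟫_ℂ = 0 := by
    intro φ i hi j hj hij
    rw [inner_smul_left, inner_smul_right, horth i hi j hj hij, mul_zero, mul_zero]
  have hnu2 : ‖u‖ ^ 2 = ∑ j ∈ t, ‖c j • v j‖ ^ 2 := by
    rw [hu_sum]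
    exact norm_sum_sq t _ (horth' c)
  have hnz2 : ‖z‖ ^ 2 = ∑ j ∈ t, ‖(α j - ρ * c j) • v j‖ ^ 2 := by
    rw [hz_sum]
    exact norm_sum_sq t _ (horth' _)
  have hbpos : ∃ i ∈ t, ‖c i • v i‖ ^ 2 ≠ 0 := by
    apply Finset.exists_ne_zero_of_sum_ne_zero
    rw [← hnu2]
    exact pow_ne_zero 2 hnu
  obtain ⟨j, hjt, hbj, hineq⟩ := aux_min t (fun i => ‖(α i - ρ * c i) • v i‖ ^ 2)
    (fun i => ‖c i • v i‖ ^ 2) (fun i _ => sq_nonneg _) (fun i _ => sq_nonneg _) hbpos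
  have hcvne : ‖c j‖ * ‖v j‖ ≠ 0 := by
    intro h
    apply hbj
    simp only [norm_smul, h]
    norm_num
  have hcj : c j ≠ 0 := norm_ne_zero_iff.1 (mul_ne_zero_iff.1 hcvne).1
  have hαj : α j - 1 ≠ 0 := by
    intro h
    apply hcj
    rw [hc j, h, mul_zero]
  set l : ℂ := μ₀ * α j / (α j - 1) with hldef
  have hkey : (l - ρ) * c j = α j - ρ * c j := by
    rw [hldef, hc j]
    field_simp
  have ha_eq : ‖(α j - ρ * c j) • v j‖ ^ 2 = ‖l - ρ‖ ^ 2 * ‖c j • v j‖ ^ 2 := by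
    rw [← hkey, ← smul_smul, norm_smul, mul_pow]
  -- the eigenvalue is in the spectrum
  have hlspec : l ∈ genSpec M N := by
    have hcoef : (1 - l / μ₀) * α j + l / μ₀ = 0 := by
      rw [hldef]
      field_simp
      ring
    set vj' : Fin n → ℂ := WithLp.equiv 2 (Fin n → ℂ) (v j) with hvjdef
    have hvj : v j ≠ 0 := norm_ne_zero_iff.1 (mul_ne_zero_iff.1 hcvne).2
    have hvj' : vj' ≠ 0 := by
      intro h
      apply hvj
      have := congrArg (WithLp.equiv 2 (Fin n → ℂ)).symm h
      simpa [hvjdef] using this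
    have hBv : B *ᵥ vj' = α j • vj' := by
      have := congrArg (WithLp.equiv 2 (Fin n → ℂ)) (heig j)
      rwa [Matrix.piLp_equiv_toEuclideanLin_apply, WithLp.equiv_smul] at this
    set p : Fin n → ℂ := Q⁻¹ *ᵥ vj' with hpdef
    have hpne : p ≠ 0 := by
      intro h
      apply hvj'
      have : vj' = Q *ᵥ (Q⁻¹ *ᵥ vj') := by
        rw [Matrix.mulVec_mulVec, hQ1, Matrix.one_mulVec]
      rw [this, ← hpdef, h, Matrix.mulVec_zero]
    have hAQi : A * Q⁻¹ = Q⁻¹ * B := by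
      rw [hBdef]
      rw [Matrix.mul_assoc, Matrix.mul_assoc]
      rw [hQ2', hAdef, Matrix.mul_assoc]
    have hAp : A *ᵥ p = α j • p := by
      rw [hpdef, Matrix.mulVec_mulVec, hAQi, ← Matrix.mulVec_mulVec, hBv, Matrix.mulVec_smul]
    have hCp : ((1 - l / μ₀) • A + (l / μ₀) • 1) *ᵥ p = 0 := by
      rw [Matrix.add_mulVec, Matrix.smul_mulVec, Matrix.smul_mulVec,
        Matrix.one_mulVec, hAp, smul_smul, ← add_smul, hcoef, zero_smul]
    have hCdet : ((1 - l / μ₀) • A + (l / μ₀) • (1 : Matrix (Fin n) (Fin n) ℂ)).det = 0 :=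
      (Matrix.exists_mulVec_eq_zero_iff).1 ⟨p, hpne, hCp⟩
    have hfac : M - l • N = ((1 - l / μ₀) • A + (l / μ₀) • 1) * S := by
      rw [Matrix.add_mul, Matrix.smul_mul, Matrix.smul_mul, hAS, Matrix.one_mul, hSdef]
      rw [smul_sub, sub_smul, one_smul, smul_smul, div_mul_cancel₀ _ hμ₀]
      abel
    show (M - l • N).det = 0
    rw [hfac, Matrix.det_mul, hCdet, zero_mul]
  refine ⟨l, hlspec, ?_⟩
  -- the inequality
  have hbjpos : 0 < ‖c j • v j‖ ^ 2 := lt_of_le_of_ne (sq_nonneg _) (Ne.symm hbj)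
  have hsum_b_pos : 0 < ∑ i ∈ t, ‖c i • v i‖ ^ 2 := by
    rw [← hnu2]
    positivity
  have h1 : ‖l - ρ‖ ^ 2 * (∑ i ∈ t, ‖c i • v i‖ ^ 2) ≤
      ∑ i ∈ t, ‖(α i - ρ * c i) • v i‖ ^ 2 := by
    have h' := hineq
    rw [ha_eq] at h'
    rw [mul_comm (‖l - ρ‖ ^ 2) (‖c j • v j‖ ^ 2), mul_assoc] at h'
    rw [mul_comm (∑ i ∈ t, ‖(α i - ρ * c i) • v i‖ ^ 2) (‖c j • v j‖ ^ 2)] at h'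
    exact le_of_mul_le_mul_left h' hbjpos
  have h2 : ‖l - ρ‖ ^ 2 ≤ (‖z‖ / ‖u‖) ^ 2 := by
    rw [div_pow, hnz2, hnu2, le_div_iff₀ hsum_b_pos]
    exact h1
  have h3 : ‖l - ρ‖ ≤ ‖z‖ / ‖u‖ := by
    have hy : (0:ℝ) ≤ ‖z‖ / ‖u‖ := div_nonneg (norm_nonneg _) (norm_nonneg _)
    have hs := Real.sqrt_le_sqrt h2
    rwa [Real.sqrt_sq (norm_nonneg _), Real.sqrt_sq hy] at hs
  rw [hr0]
  exact h3
end

section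
/- Assume the pencil (M,N) is self-adjoint with respect to P and that N is invertible, so that every element of Λ(M,N) is real; let λ₁ = min Λ(M,N) and λₙ = max Λ(M,N). Let x ∈ ℂ^n, x ≠ 0, and let μ ∈ ℝ satisfy μ > rq_{M,N}(x) and |λ₁ − μ| ≥ |λₙ − μ|. Then |λ₁ − qf_x(μ)| ≤ |λ₁ − rq_{M,N}(x)|, with equality if and only if x is an eigenvector of the pencil (Mx = λNx for some λ). -/
open Matrix Filter Topology
open scoped ComplexOrder

lemma stmt8_arith (l1 ln ρ μ t : ℝ) (ht : 0 ≤ t) (h1 : l1 ≤ ρ) (h2 : ρ ≤ ln)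
    (hK : t ≤ (ρ - l1) * (ln - ρ)) (hμ : ρ < μ) (hd : |ln - μ| ≤ |l1 - μ|) :
    |l1 - (μ - Real.sqrt ((μ - ρ)^2 + t))| ≤ ρ - l1 ∧
    (|l1 - (μ - Real.sqrt ((μ - ρ)^2 + t))| = ρ - l1 ↔ t = 0) := by
  set s := Real.sqrt ((μ - ρ)^2 + t) with hs
  have hs0 : 0 ≤ s := Real.sqrt_nonneg _
  have hssq : s^2 = (μ - ρ)^2 + t := Real.sq_sqrt (by positivity)
  have hmid : l1 + ln ≤ 2 * μ := by
    have h1' : |l1 - μ| = μ - l1 := by rw [abs_sub_comm]; exact abs_of_nonneg (by linarith)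
    have := le_trans (le_abs_self (ln - μ)) (h1' ▸ hd)
    linarith
  have hslb : μ - ρ ≤ s := by
    rw [hs]
    calc μ - ρ = Real.sqrt ((μ - ρ)^2) := (Real.sqrt_sq (by linarith)).symm
    _ ≤ _ := Real.sqrt_le_sqrt (by linarith)
  have hsub : s ≤ μ - 2*l1 + ρ := by
    rw [hs]
    calc Real.sqrt ((μ - ρ)^2 + t) ≤ Real.sqrt ((μ - 2*l1 + ρ)^2) := by
          apply Real.sqrt_le_sqrt; nlinarith
    _ = μ - 2*l1 + ρ := Real.sqrt_sq (by linarith)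
  constructor
  · rw [abs_le]; constructor <;> linarith
  · constructor
    · intro he
      rcases (abs_eq (by linarith : (0:ℝ) ≤ ρ - l1)).mp he with h | h
      · -- l1 - (μ - s) = ρ - l1, i.e. s = μ - 2 l1 + ρ
        have hseq : s = μ - 2*l1 + ρ := by linarith
        have ht4 : t = 4*(ρ - l1)*(μ - l1) := by
          have h2s : (μ - 2*l1 + ρ)^2 = (μ - ρ)^2 + t := by rw [← hseq]; exact hssq
          nlinarith [h2s]
        by_contra h'
        have htpos : 0 < t := ht.lt_of_ne (Ne.symm h')
        have ha : 0 < ρ - l1 := by nlinarith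
        have hb : 0 < μ - l1 := by linarith
        have h4 : 4*(μ - l1) ≤ ln - ρ := by
          by_contra hc
          push_neg at hc
          nlinarith [mul_lt_mul_of_pos_left hc ha]
        linarith
      · have hseq : s = μ - ρ := by linarith
        nlinarith [hssq]
    · intro ht0
      subst ht0
      have : s = μ - ρ := by rw [hs]; simpa using Real.sqrt_sq (by linarith : (0:ℝ) ≤ μ - ρ)
      rw [this, abs_of_nonpos (by linarith)]
      ring

lemma stmt8_psd {n : ℕ} (B : Matrix (Fin n) (Fin n) ℂ) (hB : B.IsHermitian)
    (l1 ln : ℝ) (h1 : ∀ i, l1 ≤ hB.eigenvalues i) (h2 : ∀ i, hB.eigenvalues i ≤ ln) :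
    ((B - (l1:ℂ) • 1) * ((ln:ℂ) • 1 - B)).PosSemidef := by
  set U : Matrix (Fin n) (Fin n) ℂ := ↑hB.eigenvectorUnitary with hU
  have hUU : (star U) * U = 1 := Matrix.mem_unitaryGroup_iff'.mp hB.eigenvectorUnitary.2
  have hUU' : U * (star U) = 1 := Matrix.mem_unitaryGroup_iff.mp hB.eigenvectorUnitary.2
  have hspec : B = U * Matrix.diagonal (RCLike.ofReal ∘ hB.eigenvalues) * star U :=
    hB.spectral_theorem
  set D : Matrix (Fin n) (Fin n) ℂ := Matrix.diagonal (RCLike.ofReal ∘ hB.eigenvalues) with hD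
  have e1 : B - (l1:ℂ) • 1 = U * (D - (l1:ℂ) • 1) * star U := by
    rw [Matrix.mul_sub, Matrix.sub_mul, ← hspec, Matrix.mul_smul, mul_one,
      Matrix.smul_mul, hUU']
  have e2 : (ln:ℂ) • 1 - B = U * ((ln:ℂ) • 1 - D) * star U := by
    rw [Matrix.mul_sub, Matrix.sub_mul, ← hspec, Matrix.mul_smul, mul_one,
      Matrix.smul_mul, hUU']
  have key : (B - (l1:ℂ) • 1) * ((ln:ℂ) • 1 - B) =
      U * ((D - (l1:ℂ) • 1) * ((ln:ℂ) • 1 - D)) * star U := by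
    rw [e1, e2]
    simp only [Matrix.mul_assoc]
    rw [← Matrix.mul_assoc (star U) U, hUU, one_mul]
  have hfun : (fun i => ((hB.eigenvalues i : ℂ) - l1) * ((ln : ℂ) - hB.eigenvalues i)) =
      (fun i => (((hB.eigenvalues i - l1) * (ln - hB.eigenvalues i) : ℝ) : ℂ)) := by
    funext i; push_cast; ring
  have hdiag : (D - (l1:ℂ) • 1) * ((ln:ℂ) • 1 - D) =
      Matrix.diagonal (fun i => (((hB.eigenvalues i - l1) * (ln - hB.eigenvalues i) : ℝ) : ℂ)) := by
    rw [hD, smul_one_eq_diagonal, smul_one_eq_diagonal, Matrix.diagonal_sub,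
      Matrix.diagonal_sub, Matrix.diagonal_mul_diagonal, ← hfun]
    rfl
  rw [key, hdiag]
  have hpsd : (Matrix.diagonal
      (fun i => (((hB.eigenvalues i - l1) * (ln - hB.eigenvalues i) : ℝ) : ℂ))).PosSemidef :=
    Matrix.PosSemidef.diagonal (fun i => by
      show (0:ℂ) ≤ _
      rw [Complex.zero_le_real]
      exact mul_nonneg (by linarith [h1 i]) (by linarith [h2 i]))
  simpa [Matrix.star_eq_conjTranspose] using hpsd.mul_mul_conjTranspose_same U

/-- expansion of ‖a - c•w‖² for real c -/
lemma stmt8_expand {n : ℕ} (w a : Fin n → ℂ) (c : ℝ) :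
    (star (a - (c:ℂ) • w) ⬝ᵥ (a - (c:ℂ) • w)).re
      = (star a ⬝ᵥ a).re - 2*c*(star w ⬝ᵥ a).re + c^2 * (star w ⬝ᵥ w).re := by
  have hsw : (star a ⬝ᵥ w).re = (star w ⬝ᵥ a).re := by
    rw [Matrix.star_dotProduct]
    simp
  simp only [star_sub, star_smul, sub_dotProduct, dotProduct_sub,
    smul_dotProduct, dotProduct_smul, Complex.star_def, Complex.conj_ofReal]
  simp only [Complex.sub_re, smul_eq_mul, Complex.mul_re, Complex.ofReal_re, Complex.ofReal_im]
  ring_nf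
  rw [hsw]
  ring

lemma stmt8_herm_real {n : ℕ} (B : Matrix (Fin n) (Fin n) ℂ) (hB : B.IsHermitian)
    (u : Fin n → ℂ) :
    star u ⬝ᵥ (B *ᵥ u) = (((star u ⬝ᵥ (B *ᵥ u)).re : ℝ) : ℂ) := by
  have h1 : star u ⬝ᵥ (B *ᵥ u) = star (star (B *ᵥ u) ⬝ᵥ u) := Matrix.star_dotProduct u (B *ᵥ u)
  have h2 : star (B *ᵥ u) ⬝ᵥ u = star u ⬝ᵥ (B *ᵥ u) := by
    rw [Matrix.star_mulVec, hB.eq, ← Matrix.dotProduct_mulVec]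
  have hsa' : star (star u ⬝ᵥ (B *ᵥ u)) = star u ⬝ᵥ (B *ᵥ u) :=
    (show star (star u ⬝ᵥ (B *ᵥ u)) = star (B *ᵥ u) ⬝ᵥ u by rw [h1, star_star]).trans h2
  exact ((Complex.conj_eq_iff_re).mp hsa').symm

lemma stmt8_BB {n : ℕ} (B : Matrix (Fin n) (Fin n) ℂ) (hB : B.IsHermitian) (u : Fin n → ℂ) :
    star u ⬝ᵥ (B *ᵥ (B *ᵥ u)) = star (B *ᵥ u) ⬝ᵥ (B *ᵥ u) := by
  rw [Matrix.dotProduct_mulVec, Matrix.star_mulVec, hB.eq]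

set_option maxHeartbeats 1000000 in
/-- for `μ` beyond the Rayleigh quotient and at least as far from `λ₁` as
from `λₙ`, the quotient beats the Rayleigh quotient as an estimate of `λ₁`, with equality
iff `x` is an eigenvector. -/
theorem stmt_8 {n : ℕ} (hn : 1 ≤ n) (M N P : Matrix (Fin n) (Fin n) ℂ)
    (hP : P.PosDef) (hsa : (Nᴴ * P * M).IsHermitian) (hN : IsUnit N)
    (lam1 lamn : ℝ)
    (hlam1 : IsLeast {l : ℝ | (l : ℂ) ∈ genSpec M N} lam1)
    (hlamn : IsGreatest {l : ℝ | (l : ℂ) ∈ genSpec M N} lamn)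
    (x : Fin n → ℂ) (hx : x ≠ 0)
    (μ : ℝ) (hμ : (rq M N P x).re < μ) (hdist : |lamn - μ| ≤ |lam1 - μ|) :
    ‖(lam1 : ℂ) - qf M N P x μ‖ ≤ ‖(lam1 : ℂ) - rq M N P x‖ ∧
    (‖(lam1 : ℂ) - qf M N P x μ‖ = ‖(lam1 : ℂ) - rq M N P x‖ ↔
      ∃ l : ℂ, M.mulVec x = l • N.mulVec x) := by
  classical
  have hNdet : IsUnit N.det := (Matrix.isUnit_iff_isUnit_det N).mp hN
  set S : Matrix (Fin n) (Fin n) ℂ := (open scoped MatrixOrder in CFC.sqrt P) with hSdef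
  have hSS : S * S = P := (open scoped MatrixOrder in CFC.sqrt_mul_sqrt_self P hP.posSemidef.nonneg)
  have hSH : S.IsHermitian := (open scoped MatrixOrder in (CFC.sqrt_nonneg P).isSelfAdjoint)
  have hSdet : IsUnit S.det := by
    rw [isUnit_iff_ne_zero]
    intro h
    have : P.det = 0 := by rw [← hSS, Matrix.det_mul, h, mul_zero]
    exact (ne_of_gt hP.det_pos) this
  have hS1 : S⁻¹ * S = 1 := Matrix.nonsing_inv_mul S hSdet
  have hS1' : S * S⁻¹ = 1 := Matrix.mul_nonsing_inv S hSdet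
  have hN1 : N⁻¹ * N = 1 := Matrix.nonsing_inv_mul N hNdet
  have hN1' : N * N⁻¹ = 1 := Matrix.mul_nonsing_inv N hNdet
  set A : Matrix (Fin n) (Fin n) ℂ := M * N⁻¹ with hAdef
  set B : Matrix (Fin n) (Fin n) ℂ := S * A * S⁻¹ with hBdef
  -- self-adjointness transfer
  have hK : Mᴴ * P * N = Nᴴ * P * M := by
    calc Mᴴ * P * N = (Nᴴ * P * M)ᴴ := by
          rw [Matrix.conjTranspose_mul, Matrix.conjTranspose_mul, hP.isHermitian.eq,
            Matrix.conjTranspose_conjTranspose]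
          noncomm_ring
    _ = Nᴴ * P * M := hsa.eq
  have hAP : Aᴴ * P = P * A := by
    have h1 : Aᴴ = (N⁻¹)ᴴ * Mᴴ := by rw [hAdef, Matrix.conjTranspose_mul]
    have h2 : Mᴴ * P = Nᴴ * P * M * N⁻¹ := by
      have := congrArg (fun Z => Z * N⁻¹) hK
      simpa [Matrix.mul_assoc, hN1'] using this
    rw [h1, Matrix.mul_assoc, h2]
    have h3 : (N⁻¹)ᴴ * Nᴴ = 1 := by
      rw [← Matrix.conjTranspose_mul, hN1', Matrix.conjTranspose_one]
    calc (N⁻¹)ᴴ * (Nᴴ * P * M * N⁻¹) = ((N⁻¹)ᴴ * Nᴴ) * (P * M * N⁻¹) := by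
          noncomm_ring
    _ = P * M * N⁻¹ := by rw [h3, one_mul]
    _ = P * A := by rw [hAdef]; noncomm_ring
  have hBH : B.IsHermitian := by
    have hSinvH : (S⁻¹)ᴴ = S⁻¹ := by
      rw [Matrix.conjTranspose_nonsing_inv, hSH.eq]
    have hBconj : Bᴴ = S⁻¹ * Aᴴ * S := by
      rw [hBdef, Matrix.conjTranspose_mul, Matrix.conjTranspose_mul, hSinvH, hSH.eq]
      noncomm_ring
    have key : S * (Bᴴ) * S = S * B * S := by
      rw [hBconj, hBdef]
      calc S * (S⁻¹ * Aᴴ * S) * S = (S * S⁻¹) * Aᴴ * (S * S) := by noncomm_ring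
      _ = Aᴴ * P := by rw [hS1', hSS, one_mul]
      _ = P * A := hAP
      _ = (S * S) * A := by rw [hSS]
      _ = S * (S * A * S⁻¹) * S := by
            rw [Matrix.mul_assoc S (S * A * S⁻¹) S, Matrix.mul_assoc (S*A) S⁻¹ S,
              hS1, mul_one]
            noncomm_ring
    have := congrArg (fun Z => S⁻¹ * Z * S⁻¹) key
    simpa only [Matrix.IsHermitian, Matrix.mul_assoc, ← Matrix.mul_assoc S⁻¹ S,
      hS1, one_mul, Matrix.mul_nonsing_inv, hS1', mul_one,
      show ∀ X : Matrix (Fin n) (Fin n) ℂ, X * (S * S⁻¹) = X by intro X; rw [hS1', mul_one]]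
      using this
  -- vectors
  set y : Fin n → ℂ := N *ᵥ x with hydef
  set w : Fin n → ℂ := S *ᵥ y with hwdef
  have hyx : y ≠ 0 := by
    intro h
    apply hx
    have hxy : N⁻¹ *ᵥ y = x := by
      rw [hydef, Matrix.mulVec_mulVec, hN1, Matrix.one_mulVec]
    rw [← hxy, h, Matrix.mulVec_zero]
  have hw0 : w ≠ 0 := by
    intro h
    apply hyx
    have hyw : S⁻¹ *ᵥ w = y := by
      rw [hwdef, Matrix.mulVec_mulVec, hS1, Matrix.one_mulVec]
    rw [← hyw, h, Matrix.mulVec_zero]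
  have hBSN : B * S * N = S * M := by
    rw [hBdef, hAdef]
    calc S * (M * N⁻¹) * S⁻¹ * S * N = S * M * (N⁻¹ * (S⁻¹ * S) * N) := by noncomm_ring
    _ = S * M := by rw [hS1, mul_one, hN1, mul_one]
  have hBw : B *ᵥ w = S *ᵥ (M *ᵥ x) := by
    rw [hwdef, hydef, Matrix.mulVec_mulVec, Matrix.mulVec_mulVec, Matrix.mulVec_mulVec, hBSN]
  have hinner : ∀ u v : Fin n → ℂ, innerP P u v = star (S *ᵥ v) ⬝ᵥ (S *ᵥ u) := by
    intro u v
    rw [innerP, ← hSS, Matrix.star_mulVec, hSH.eq, ← Matrix.dotProduct_mulVec,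
      Matrix.mulVec_mulVec]
  -- scalar quantities
  have hrealdot : ∀ v : Fin n → ℂ, star v ⬝ᵥ v = (((star v ⬝ᵥ v).re : ℝ) : ℂ) := fun v =>
    Complex.eq_re_of_ofReal_le (by exact_mod_cast dotProduct_star_self_nonneg v)
  have hrealdotnn : ∀ v : Fin n → ℂ, 0 ≤ (star v ⬝ᵥ v).re := fun v =>
    (Complex.nonneg_iff.mp (dotProduct_star_self_nonneg v)).1
  set g : ℝ := (star w ⬝ᵥ w).re with hgdef
  have hgC : star w ⬝ᵥ w = (g : ℂ) := hrealdot w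
  have hgpos : 0 < g := by
    rcases (hrealdotnn w).lt_or_eq with h | h
    · exact h
    · exfalso
      apply hw0
      apply dotProduct_star_self_eq_zero.mp
      rw [hgC, hgdef, ← h, Complex.ofReal_zero]
  have hquad : star w ⬝ᵥ (B *ᵥ w) = (((star w ⬝ᵥ (B *ᵥ w)).re : ℝ) : ℂ) :=
    stmt8_herm_real B hBH w
  set R : ℝ := (star w ⬝ᵥ (B *ᵥ w)).re with hRdef
  have hρR : star w ⬝ᵥ (B *ᵥ w) = (R : ℂ) := hquad
  set ρ : ℝ := R / g with hρdef
  have hRρg : R = ρ * g := by rw [hρdef]; field_simp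
  -- the Rayleigh quotient
  have hrq : rq M N P x = (ρ : ℂ) := by
    rw [rq, hinner, hinner]
    rw [show S *ᵥ (N *ᵥ x) = w by rw [hwdef, hydef]]
    rw [show star w ⬝ᵥ (S *ᵥ (M *ᵥ x)) = (R:ℂ) by rw [← hBw]; exact hρR]
    rw [hgC, hρdef]
    push_cast
    ring
  have hμρ : ρ < μ := by rw [hrq] at hμ; simpa using hμ
  -- b2 and the Kantorovich bound
  set b2 : ℝ := (star (B *ᵥ w) ⬝ᵥ (B *ᵥ w)).re with hb2def
  have hBB : star w ⬝ᵥ (B *ᵥ (B *ᵥ w)) = (b2 : ℂ) := by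
    rw [stmt8_BB B hBH w, hb2def]
    exact hrealdot _
  -- eigenvalue bounds
  have hMl : ∀ l : ℂ, M - l • N = S⁻¹ * (B - l • 1) * (S * N) := by
    intro l
    rw [Matrix.mul_sub, Matrix.sub_mul]
    congr 1
    · rw [hBdef, hAdef]
      refine Eq.symm ?_
      calc S⁻¹ * (S * (M * N⁻¹) * S⁻¹) * (S * N)
          = (S⁻¹ * S) * (M * (N⁻¹ * ((S⁻¹ * S) * N))) := by noncomm_ring
      _ = M := by rw [hS1, one_mul, one_mul, hN1, mul_one]
    · rw [Matrix.mul_smul, mul_one, Matrix.smul_mul]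
      congr 1
      rw [← Matrix.mul_assoc, hS1, one_mul]
  have hev : ∀ i, (hBH.eigenvalues i : ℝ) ∈ {l : ℝ | (l : ℂ) ∈ genSpec M N} := by
    intro i
    have hvec := hBH.mulVec_eigenvectorBasis i
    have hvne : (⇑(hBH.eigenvectorBasis i) : Fin n → ℂ) ≠ 0 := by
      intro h
      apply hBH.eigenvectorBasis.orthonormal.ne_zero i
      ext j
      exact congrFun h j
    have hker : (B - (hBH.eigenvalues i : ℂ) • 1) *ᵥ ⇑(hBH.eigenvectorBasis i) = 0 := by
      rw [Matrix.sub_mulVec, hvec, Matrix.smul_mulVec, Matrix.one_mulVec]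
      funext j
      simp [Complex.real_smul]
    have hdet0 : (B - (hBH.eigenvalues i : ℂ) • 1).det = 0 :=
      Matrix.exists_mulVec_eq_zero_iff.mp ⟨_, hvne, hker⟩
    show ((hBH.eigenvalues i : ℝ) : ℂ) ∈ genSpec M N
    simp only [genSpec, Set.mem_setOf_eq, hMl ((hBH.eigenvalues i : ℝ) : ℂ), Matrix.det_mul,
      hdet0, mul_zero, zero_mul]
  have hl1ev : ∀ i, lam1 ≤ hBH.eigenvalues i := fun i => hlam1.2 (hev i)
  have hlnev : ∀ i, hBH.eigenvalues i ≤ lamn := fun i => hlamn.2 (hev i)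
  have hpsd := stmt8_psd B hBH lam1 lamn hl1ev hlnev
  have hKant : b2 ≤ (lam1 + lamn) * R - lam1 * lamn * g := by
    have h0 := hpsd.dotProduct_mulVec_nonneg w
    have hexp : star w ⬝ᵥ (((B - (lam1:ℂ) • 1) * ((lamn:ℂ) • 1 - B)) *ᵥ w)
        = (((lam1 + lamn) * R - b2 - lam1 * lamn * g : ℝ) : ℂ) := by
      rw [← Matrix.mulVec_mulVec]
      simp only [Matrix.sub_mulVec, Matrix.mulVec_sub, Matrix.smul_mulVec,
        Matrix.one_mulVec, Matrix.mulVec_smul, dotProduct_sub, dotProduct_smul,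
        smul_eq_mul]
      rw [hBB, hρR, hgC]
      push_cast
      ring
    rw [hexp] at h0
    rw [Complex.zero_le_real] at h0
    linarith
  -- the residual
  set vρ : Fin n → ℂ := (B *ᵥ w) - ((ρ:ℝ) : ℂ) • w with hvρdef
  set rρ2 : ℝ := (star vρ ⬝ᵥ vρ).re with hrρ2def
  have hrρ2 : rρ2 = b2 - 2*ρ*R + ρ^2*g := by
    rw [hrρ2def, hvρdef, stmt8_expand w (B *ᵥ w) ρ, ← hRdef, ← hgdef, ← hb2def]
  have hrρ2nn : 0 ≤ rρ2 := hrealdotnn vρ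
  set t : ℝ := rρ2 / g with htdef
  have htnn : 0 ≤ t := div_nonneg hrρ2nn hgpos.le
  have hKt : t ≤ (ρ - lam1) * (lamn - ρ) := by
    rw [htdef, div_le_iff₀ hgpos]
    have hK2 : b2 ≤ (lam1 + lamn) * (ρ * g) - lam1 * lamn * g := by
      rw [← hRρg]; exact hKant
    have hr2 : rρ2 = b2 - 2 * ρ * (ρ * g) + ρ^2 * g := by
      rw [← hRρg]; exact hrρ2
    nlinarith [hK2, hr2]
  have hl1n : lam1 ≤ lamn := hlam1.2 hlamn.1
  have hprod : 0 ≤ (ρ - lam1) * (lamn - ρ) := le_trans htnn hKt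
  have h1ρ : lam1 ≤ ρ := by nlinarith
  have hρn : ρ ≤ lamn := by nlinarith
  -- value of the quotient function
  have hvμS : S *ᵥ ((M - (μ:ℂ) • N) *ᵥ x) = (B *ᵥ w) - (μ:ℂ) • w := by
    rw [Matrix.sub_mulVec, Matrix.smul_mulVec, Matrix.mulVec_sub, Matrix.mulVec_smul,
      hBw, ← hydef, ← hwdef]
  have hcval : innerP P ((M - (μ:ℂ) • N) *ᵥ x) (N *ᵥ x) = ((R - μ * g : ℝ) : ℂ) := by
    rw [hinner, hvμS, ← hydef, ← hwdef, dotProduct_sub, dotProduct_smul,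
      hρR, hgC, smul_eq_mul]
    push_cast
    ring
  have hcne : R - μ * g < 0 := by
    rw [hRρg]
    have h1 : (ρ - μ) * g < 0 := mul_neg_of_neg_of_pos (sub_neg.mpr hμρ) hgpos
    have h2 : (ρ - μ) * g = ρ * g - μ * g := by ring
    linarith
  have hq2 : (innerP P ((M - (μ:ℂ) • N) *ᵥ x) ((M - (μ:ℂ) • N) *ᵥ x)).re
      = rρ2 + (μ - ρ)^2 * g := by
    rw [hinner, hvμS]
    rw [show (star ((B *ᵥ w) - (μ:ℂ) • w) ⬝ᵥ ((B *ᵥ w) - (μ:ℂ) • w)).re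
        = b2 - 2*μ*R + μ^2*g by
      rw [stmt8_expand w (B *ᵥ w) μ, ← hRdef, ← hgdef, ← hb2def]]
    rw [hrρ2]
    linear_combination (2*ρ - 2*μ) * hRρg
  have hnormDen : normP P (N *ᵥ x) = Real.sqrt g := by
    rw [normP, hinner, ← hydef, ← hwdef, ← hgdef]
  have hnormNum : normP P ((M - (μ:ℂ) • N) *ᵥ x) = Real.sqrt (rρ2 + (μ - ρ)^2 * g) := by
    rw [normP, hq2]
  have hsqrt : Real.sqrt (rρ2 + (μ - ρ)^2 * g) / Real.sqrt g = Real.sqrt ((μ - ρ)^2 + t) := by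
    rw [← Real.sqrt_div (by positivity) g]
    congr 1
    rw [htdef]
    field_simp
    ring
  have hqf : qf M N P x (μ:ℂ) = ((μ - Real.sqrt ((μ - ρ)^2 + t) : ℝ) : ℂ) := by
    rw [qf, hcval, hnormNum, hnormDen, hsqrt, Complex.norm_real, Real.norm_eq_abs, abs_of_neg hcne]
    have hne : ((-(R - μ * g) : ℝ) : ℂ) ≠ 0 := by
      simp only [ne_eq, Complex.ofReal_eq_zero]
      linarith
    rw [show ((R - μ * g : ℝ) : ℂ) / ((-(R - μ * g) : ℝ) : ℂ) = -1 by
      rw [div_eq_iff hne]; push_cast; ring]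
    push_cast
    ring
  obtain ⟨hineq, hiff⟩ := stmt8_arith lam1 lamn ρ μ t htnn h1ρ hρn hKt hμρ hdist
  have hLHS : ‖(lam1 : ℂ) - qf M N P x (μ:ℂ)‖
      = |lam1 - (μ - Real.sqrt ((μ - ρ)^2 + t))| := by
    rw [hqf, show ((lam1:ℂ) - ((μ - Real.sqrt ((μ - ρ)^2 + t) : ℝ):ℂ))
      = (((lam1 - (μ - Real.sqrt ((μ - ρ)^2 + t))) : ℝ) : ℂ) by push_cast; ring,
      Complex.norm_real, Real.norm_eq_abs]
  have hRHS : ‖(lam1 : ℂ) - rq M N P x‖ = ρ - lam1 := by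
    rw [hrq, show ((lam1:ℂ) - ((ρ:ℝ):ℂ)) = (((lam1 - ρ):ℝ):ℂ) by push_cast; ring,
      Complex.norm_real, Real.norm_eq_abs, abs_of_nonpos (by linarith)]
    ring
  have hteig : t = 0 ↔ ∃ l : ℂ, M *ᵥ x = l • (N *ᵥ x) := by
    constructor
    · intro h
      have hrρ0 : rρ2 = 0 := by
        rw [htdef, div_eq_zero_iff] at h
        rcases h with h | h
        · exact h
        · exact absurd h hgpos.ne'
      have hv0 : vρ = 0 := by
        apply dotProduct_star_self_eq_zero.mp
        rw [hrealdot vρ, ← hrρ2def, hrρ0, Complex.ofReal_zero]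
      refine ⟨((ρ:ℝ):ℂ), ?_⟩
      have hBwρ : B *ᵥ w = ((ρ:ℝ):ℂ) • w := by
        have h' := sub_eq_zero.mp (hvρdef ▸ hv0)
        exact h'
      have hSeq : S *ᵥ (M *ᵥ x) = S *ᵥ (((ρ:ℝ):ℂ) • (N *ᵥ x)) := by
        rw [Matrix.mulVec_smul, ← hydef, ← hwdef, ← hBw]
        exact hBwρ
      have h2 := congrArg (fun v => S⁻¹ *ᵥ v) hSeq
      simpa only [Matrix.mulVec_mulVec, ← Matrix.mul_assoc, hS1, one_mul,
        Matrix.one_mulVec] using h2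
    · rintro ⟨l, hl⟩
      have hBwl : B *ᵥ w = l • w := by
        rw [hBw, hl, Matrix.mulVec_smul, ← hydef, ← hwdef]
      have hlg : (R : ℂ) = l * (g:ℂ) := by
        rw [← hρR, hBwl, dotProduct_smul, hgC, smul_eq_mul]
      have hgne : ((g:ℝ):ℂ) ≠ 0 := by
        simp only [ne_eq, Complex.ofReal_eq_zero]
        exact hgpos.ne'
      have hlρ : l = ((ρ:ℝ):ℂ) := by
        rw [hρdef]
        push_cast
        rw [eq_div_iff hgne]
        linear_combination -hlg
      have hv0 : vρ = 0 := by
        rw [hvρdef, ← hlρ, hBwl, sub_self]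
      rw [htdef, hrρ2def, hv0]
      simp
  refine ⟨?_, ?_⟩
  · rw [hLHS, hRHS]
    exact hineq
  · rw [hLHS, hRHS]
    exact hiff.trans hteig
end

section
/- Assume the pencil (M,N) is self-adjoint with respect to P and let μ ∈ ℝ. If x₁, x₂ ∈ ℂ^n satisfy Mx₁ = λ₁Nx₁ and Mx₂ = λ₂Nx₂ with real eigenvalues λ₁ ≠ λ₂, then ⟨(M−μN)x₁, (M−μN)x₂⟩_P = 0. -/
open Matrix Filter Topology
open scoped ComplexOrder

/-- eigenvectors of a self-adjoint pencil associated with distinct real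
eigenvalues satisfy the orthogonality condition `⟨(M−μN)x₁,(M−μN)x₂⟩_P = 0`. -/
theorem stmt_13 {n : ℕ} (M N P : Matrix (Fin n) (Fin n) ℂ)
    (hP : P.PosDef) (hsa : (Nᴴ * P * M).IsHermitian) (μ : ℝ)
    (x1 x2 : Fin n → ℂ) (l1 l2 : ℝ)
    (h1 : M.mulVec x1 = (l1 : ℂ) • N.mulVec x1)
    (h2 : M.mulVec x2 = (l2 : ℂ) • N.mulVec x2)
    (hne : l1 ≠ l2) :
    innerP P ((M - (μ : ℂ) • N).mulVec x1) ((M - (μ : ℂ) • N).mulVec x2) = 0 := by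

  have hsmul1 : ∀ (a : ℂ) (u y : Fin n → ℂ), innerP P (a • u) y = a * innerP P u y := by
    intro a u y
    simp [innerP, Matrix.mulVec_smul, dotProduct_smul, smul_eq_mul]
  have hsmul2 : ∀ (a : ℂ) (u y : Fin n → ℂ),
      innerP P u (a • y) = starRingEnd ℂ a * innerP P u y := by
    intro a u y
    simp [innerP, star_smul, smul_dotProduct, smul_eq_mul]
  have hkey : innerP P (M.mulVec x1) (N.mulVec x2) = innerP P (N.mulVec x1) (M.mulVec x2) := by
    unfold innerP
    rw [Matrix.star_mulVec, Matrix.star_mulVec, Matrix.mulVec_mulVec, Matrix.mulVec_mulVec,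
      Matrix.dotProduct_mulVec, Matrix.dotProduct_mulVec, Matrix.vecMul_vecMul,
      Matrix.vecMul_vecMul]
    have hmat : Nᴴ * (P * M) = Mᴴ * (P * N) := by
      have h := hsa.eq
      calc Nᴴ * (P * M) = Nᴴ * P * M := by rw [mul_assoc]
        _ = (Nᴴ * P * M)ᴴ := h.symm
        _ = Mᴴ * (Pᴴ * N) := by
            simp [Matrix.conjTranspose_mul, mul_assoc]
        _ = Mᴴ * (P * N) := by rw [hP.isHermitian.eq]
    rw [hmat]
  set c := innerP P (N.mulVec x1) (N.mulVec x2) with hc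
  have hc0 : c = 0 := by
    have e1 : innerP P (M.mulVec x1) (N.mulVec x2) = (l1 : ℂ) * c := by
      rw [h1, hsmul1]
    have e2 : innerP P (N.mulVec x1) (M.mulVec x2) = (l2 : ℂ) * c := by
      rw [h2, hsmul2]
      simp [hc]
    have : (l1 : ℂ) * c = (l2 : ℂ) * c := by rw [← e1, ← e2, hkey]
    have hl : (l1 : ℂ) - (l2 : ℂ) ≠ 0 := by
      simpa [sub_eq_zero] using fun h => hne (by exact_mod_cast h)
    have := sub_eq_zero.mpr this
    rw [← sub_mul] at this
    rcases mul_eq_zero.mp this with h | h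
    · exact absurd h hl
    · exact h
  have hvec1 : (M - (μ : ℂ) • N).mulVec x1 = ((l1 : ℂ) - μ) • N.mulVec x1 := by
    rw [Matrix.sub_mulVec, Matrix.smul_mulVec, h1, sub_smul]
  have hvec2 : (M - (μ : ℂ) • N).mulVec x2 = ((l2 : ℂ) - μ) • N.mulVec x2 := by
    rw [Matrix.sub_mulVec, Matrix.smul_mulVec, h2, sub_smul]
  rw [hvec1, hvec2, hsmul1, hsmul2, ← hc, hc0, mul_zero, mul_zero]
end

section
/- Assume the pencil (M,N) is self-adjoint with respect to P and N is invertible, so that Λ(M,N) is a nonempty set of real numbers. Then for every μ ∈ ℝ, the infimum over all x ≠ 0 of ‖(M−μN)x‖_P/‖Nx‖_P equals min{|λ − μ| : λ ∈ Λ(M,N)} = dist(μ, Λ(M,N)); moreover this infimum is attained at every x ≠ 0 satisfying Mx = λ*Nx for an eigenvalue λ* ∈ Λ(M,N) nearest to μ. -/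
open Matrix Filter Topology
open scoped ComplexOrder

noncomputable def nsq {n : ℕ} (v : Fin n → ℂ) : ℝ := (star v ⬝ᵥ v).re

lemma nsq_eq_sum {n : ℕ} (v : Fin n → ℂ) : nsq v = ∑ i, Complex.normSq (v i) := by
  simp [nsq, dotProduct, Complex.normSq_apply, Complex.mul_re]

lemma nsq_nonneg {n : ℕ} (v : Fin n → ℂ) : 0 ≤ nsq v := by
  rw [nsq_eq_sum]; exact Finset.sum_nonneg fun i _ => Complex.normSq_nonneg _

lemma nsq_pos {n : ℕ} {v : Fin n → ℂ} (hv : v ≠ 0) : 0 < nsq v := by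
  rw [nsq_eq_sum]
  obtain ⟨i, hi⟩ := Function.ne_iff.mp hv
  exact Finset.sum_pos' (fun j _ => Complex.normSq_nonneg _)
    ⟨i, Finset.mem_univ i, Complex.normSq_pos.mpr hi⟩

lemma dot_conj_mul {n : ℕ} (Q : Matrix (Fin n) (Fin n) ℂ) (u w : Fin n → ℂ) :
    star u ⬝ᵥ (Qᴴ * Q) *ᵥ w = star (Q *ᵥ u) ⬝ᵥ (Q *ᵥ w) := by
  rw [star_mulVec, ← mulVec_mulVec, dotProduct_mulVec]

lemma nsq_unitary {n : ℕ} {U : Matrix (Fin n) (Fin n) ℂ}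
    (hU : U ∈ Matrix.unitaryGroup (Fin n) ℂ) (v : Fin n → ℂ) :
    nsq (U *ᵥ v) = nsq v := by
  have h1 : Uᴴ * U = 1 := Matrix.mem_unitaryGroup_iff'.mp hU
  have := dot_conj_mul U v v
  rw [h1, one_mulVec] at this
  simp [nsq, ← this]

section Herm
variable {n : ℕ} {A : Matrix (Fin n) (Fin n) ℂ} (hA : A.IsHermitian)

lemma herm_decomp (l : ℂ) :
    A - l • 1 = (hA.eigenvectorUnitary : Matrix (Fin n) (Fin n) ℂ) *
      Matrix.diagonal (fun i => (hA.eigenvalues i : ℂ) - l) *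
      (star hA.eigenvectorUnitary : Matrix (Fin n) (Fin n) ℂ) := by
  have hU : (hA.eigenvectorUnitary : Matrix (Fin n) (Fin n) ℂ) *
      (star hA.eigenvectorUnitary : Matrix (Fin n) (Fin n) ℂ) = 1 :=
    Matrix.mem_unitaryGroup_iff.mp hA.eigenvectorUnitary.2
  have h1 : l • (1 : Matrix (Fin n) (Fin n) ℂ) =
      (hA.eigenvectorUnitary : Matrix (Fin n) (Fin n) ℂ) *
      Matrix.diagonal (fun _ => l) *
      (star hA.eigenvectorUnitary : Matrix (Fin n) (Fin n) ℂ) := by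
    have : Matrix.diagonal (fun _ : Fin n => l) = l • (1 : Matrix (Fin n) (Fin n) ℂ) := by
      rw [smul_eq_diagonal_mul]; simp
    rw [this, Matrix.mul_smul, Matrix.smul_mul, mul_one, hU]
  conv_lhs => rw [hA.spectral_theorem, Unitary.conjStarAlgAut_apply, h1]
  rw [← Matrix.sub_mul, ← Matrix.mul_sub, Matrix.diagonal_sub]
  rfl

lemma herm_det (l : ℂ) :
    (A - l • 1).det = ∏ i, ((hA.eigenvalues i : ℂ) - l) := by
  rw [herm_decomp hA l, Matrix.det_mul, Matrix.det_mul, mul_comm, ← mul_assoc,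
    ← Matrix.det_mul, Matrix.mem_unitaryGroup_iff'.mp hA.eigenvectorUnitary.2]
  simp

lemma herm_key (μ d : ℝ) (hd0 : 0 ≤ d) (hd : ∀ i, d ≤ |hA.eigenvalues i - μ|)
    (z : Fin n → ℂ) :
    d ^ 2 * nsq z ≤ nsq ((A - (μ : ℂ) • 1) *ᵥ z) := by
  set U : Matrix (Fin n) (Fin n) ℂ := (hA.eigenvectorUnitary : Matrix (Fin n) (Fin n) ℂ) with hU
  set w : Fin n → ℂ := (star U) *ᵥ z with hw
  have hUmem : U ∈ Matrix.unitaryGroup (Fin n) ℂ := hA.eigenvectorUnitary.2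
  have hz : (A - (μ : ℂ) • 1) *ᵥ z =
      U *ᵥ (Matrix.diagonal (fun i => (hA.eigenvalues i : ℂ) - μ) *ᵥ w) := by
    rw [herm_decomp hA (μ : ℂ), ← Matrix.mulVec_mulVec, ← Matrix.mulVec_mulVec]
  rw [hz, nsq_unitary hUmem]
  have hwz : nsq w = nsq z := nsq_unitary (Unitary.star_mem hUmem) z
  rw [← hwz, nsq_eq_sum, nsq_eq_sum, Finset.mul_sum]
  apply Finset.sum_le_sum
  intro i _
  rw [Matrix.mulVec_diagonal]
  have hcast : (hA.eigenvalues i : ℂ) - (μ : ℂ) = ((hA.eigenvalues i - μ : ℝ) : ℂ) := by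
    push_cast; ring
  rw [Complex.normSq_mul, hcast, Complex.normSq_ofReal]
  have h1 : d ^ 2 ≤ (hA.eigenvalues i - μ) * (hA.eigenvalues i - μ) := by
    have h2 := hd i
    calc d ^ 2 ≤ |hA.eigenvalues i - μ| ^ 2 := pow_le_pow_left₀ hd0 h2 2
      _ = (hA.eigenvalues i - μ) * (hA.eigenvalues i - μ) := by
          rw [sq_abs]; ring
  exact mul_le_mul_of_nonneg_right h1 (Complex.normSq_nonneg _) |>.trans_eq rfl

end Herm

/-- the infimum of `‖(M−μN)x‖_P/‖Nx‖_P` over nonzero `x` equals the distance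
from `μ` to the (real) generalized spectrum, attained at eigenvectors of nearest
eigenvalues. -/
theorem stmt_14 {n : ℕ} (hn : 1 ≤ n) (M N P : Matrix (Fin n) (Fin n) ℂ)
    (hP : P.PosDef) (hsa : (Nᴴ * P * M).IsHermitian) (hN : IsUnit N) (μ : ℝ) :
    sInf {r : ℝ | ∃ x : Fin n → ℂ, x ≠ 0 ∧
        r = normP P ((M - (μ : ℂ) • N).mulVec x) / normP P (N.mulVec x)} =
      sInf ((fun l : ℝ => |l - μ|) '' {l : ℝ | (l : ℂ) ∈ genSpec M N}) ∧
    ∀ lstar : ℝ, (lstar : ℂ) ∈ genSpec M N →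
      (∀ l : ℝ, (l : ℂ) ∈ genSpec M N → |lstar - μ| ≤ |l - μ|) →
      ∀ x : Fin n → ℂ, x ≠ 0 → M.mulVec x = (lstar : ℂ) • N.mulVec x →
        normP P ((M - (μ : ℂ) • N).mulVec x) / normP P (N.mulVec x) = |lstar - μ| := by
  classical
  -- invertibility facts
  have hNdet : IsUnit N.det := (Matrix.isUnit_iff_isUnit_det N).mp hN
  have hNNi : N * N⁻¹ = 1 := Matrix.mul_nonsing_inv N hNdet
  have hNiN : N⁻¹ * N = 1 := Matrix.nonsing_inv_mul N hNdet
  obtain ⟨Q, hQH, hQQ⟩ : ∃ Q : Matrix (Fin n) (Fin n) ℂ, Qᴴ = Q ∧ Q * Q = P :=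
    open scoped MatrixOrder in
    ⟨CFC.sqrt P, (CFC.sqrt_nonneg P).posSemidef.1, CFC.sqrt_mul_sqrt_self P hP.posSemidef.nonneg⟩
  have hQdet : IsUnit Q.det := by
    have hdd : Q.det * Q.det = P.det := by rw [← Matrix.det_mul, hQQ]
    have hP0 : P.det ≠ 0 := ne_of_gt hP.det_pos
    refine isUnit_iff_ne_zero.mpr fun h => hP0 ?_
    rw [← hdd, h, mul_zero]
  have hQQi : Q * Q⁻¹ = 1 := Matrix.mul_nonsing_inv Q hQdet
  have hQiQ : Q⁻¹ * Q = 1 := Matrix.nonsing_inv_mul Q hQdet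
  set B : Matrix (Fin n) (Fin n) ℂ := M * N⁻¹ with hBdef
  set A : Matrix (Fin n) (Fin n) ℂ := Q * B * Q⁻¹ with hAdef
  have hBN : B * N = M := by rw [hBdef, Matrix.mul_assoc, hNiN, Matrix.mul_one]
  -- cancellation helpers
  have cQl : ∀ X : Matrix (Fin n) (Fin n) ℂ, Q * (Q⁻¹ * X) = X := fun X => by
    rw [← Matrix.mul_assoc, hQQi, Matrix.one_mul]
  have cQr : ∀ X : Matrix (Fin n) (Fin n) ℂ, Q⁻¹ * (Q * X) = X := fun X => by
    rw [← Matrix.mul_assoc, hQiQ, Matrix.one_mul]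
  -- self-adjointness of A
  have key : Mᴴ * P * N = Nᴴ * P * M := by
    have h := hsa
    unfold Matrix.IsHermitian at h
    calc Mᴴ * P * N = (Nᴴ * P * M)ᴴ := by
          rw [Matrix.conjTranspose_mul, Matrix.conjTranspose_mul,
            Matrix.conjTranspose_conjTranspose, hP.isHermitian.eq, Matrix.mul_assoc]
      _ = Nᴴ * P * M := h
  have hcomm : Bᴴ * P = P * B := by
    have h2 : Mᴴ * P = Nᴴ * P * M * N⁻¹ := by
      have := congrArg (fun X => X * N⁻¹) key
      simpa [Matrix.mul_assoc, hNNi] using this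
    have hBH : Bᴴ = N⁻¹ᴴ * Mᴴ := by rw [hBdef, Matrix.conjTranspose_mul]
    have hNiH : N⁻¹ᴴ * Nᴴ = 1 := by
      rw [← Matrix.conjTranspose_mul, hNNi, Matrix.conjTranspose_one]
    calc Bᴴ * P = N⁻¹ᴴ * (Mᴴ * P) := by rw [hBH, Matrix.mul_assoc]
      _ = N⁻¹ᴴ * (Nᴴ * (P * (M * N⁻¹))) := by
          rw [h2]; simp only [Matrix.mul_assoc]
      _ = P * B := by rw [← Matrix.mul_assoc, hNiH, Matrix.one_mul, hBdef]
  have hAH : A.IsHermitian := by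
    have step : Q * (Aᴴ * Q) = Q * (A * Q) := by
      have hAHexp : Aᴴ = Q⁻¹ * (Bᴴ * Q) := by
        rw [hAdef, Matrix.conjTranspose_mul, Matrix.conjTranspose_mul,
          Matrix.conjTranspose_nonsing_inv, hQH]
      calc Q * (Aᴴ * Q) = Bᴴ * (Q * Q) := by
            rw [hAHexp]; simp only [Matrix.mul_assoc]; rw [cQl]
        _ = (Q * Q) * B := by rw [hQQ, hcomm]
        _ = Q * (A * Q) := by
            rw [hAdef]
            simp only [Matrix.mul_assoc, cQr, hQiQ, Matrix.mul_one]
    have hQunit : IsUnit Q := (Matrix.isUnit_iff_isUnit_det Q).mpr hQdet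
    have h1 : Aᴴ * Q = A * Q := hQunit.mul_left_cancel step
    exact hQunit.mul_right_cancel h1
  set ev : Fin n → ℝ := hAH.eigenvalues with hev
  -- spectrum characterization
  have hspec : ∀ l : ℂ, (l ∈ genSpec M N ↔ ∃ i, (ev i : ℂ) = l) := by
    intro l
    have hfact : M - l • N = (B - l • 1) * N := by
      rw [Matrix.sub_mul, hBN, Matrix.smul_mul, Matrix.one_mul]
    have hBA : B - l • 1 = Q⁻¹ * ((A - l • 1) * Q) := by
      rw [Matrix.sub_mul, Matrix.mul_sub]
      congr 1
      · rw [hAdef]; simp only [Matrix.mul_assoc, cQr, hQiQ, Matrix.mul_one]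
      · rw [Matrix.smul_mul, Matrix.one_mul, Matrix.mul_smul, hQiQ]
    have hQQdet : Q⁻¹.det * Q.det = 1 := by
      rw [← Matrix.det_mul, hQiQ, Matrix.det_one]
    have hdet : (M - l • N).det = (∏ i, ((ev i : ℂ) - l)) * N.det := by
      rw [hfact, Matrix.det_mul, hBA, Matrix.det_mul, Matrix.det_mul, herm_det hAH l]
      linear_combination ((∏ i : Fin n, ((hAH.eigenvalues i : ℂ) - l)) * N.det) * hQQdet
    have hNdet0 : N.det ≠ 0 := hNdet.ne_zero
    constructor
    · intro hl
      have h0 : (∏ i, ((ev i : ℂ) - l)) = 0 := by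
        have := hl
        simp only [genSpec, Set.mem_setOf_eq, hdet] at this
        exact (mul_eq_zero.mp this).resolve_right hNdet0
      obtain ⟨i, -, hi⟩ := Finset.prod_eq_zero_iff.mp h0
      exact ⟨i, sub_eq_zero.mp hi⟩
    · rintro ⟨i, hi⟩
      simp only [genSpec, Set.mem_setOf_eq, hdet]
      rw [Finset.prod_eq_zero (Finset.mem_univ i) (by rw [hi, sub_self]), zero_mul]
  -- norm bridging
  have hPQQ : P = Qᴴ * Q := by rw [hQH, hQQ]
  have hnormP : ∀ u, normP P u = Real.sqrt (nsq (Q *ᵥ u)) := by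
    intro u
    unfold normP innerP nsq
    rw [hPQQ, dot_conj_mul]
  have hNxne : ∀ x : Fin n → ℂ, x ≠ 0 → N *ᵥ x ≠ 0 := by
    intro x hx h
    apply hx
    have := congrArg (fun v => N⁻¹ *ᵥ v) h
    simpa [Matrix.mulVec_mulVec, hNiN] using this
  have hQvne : ∀ v : Fin n → ℂ, v ≠ 0 → Q *ᵥ v ≠ 0 := by
    intro v hv h
    apply hv
    have := congrArg (fun u => Q⁻¹ *ᵥ u) h
    simpa [Matrix.mulVec_mulVec, hQiQ] using this
  have hposN : ∀ x : Fin n → ℂ, x ≠ 0 → 0 < normP P (N *ᵥ x) := by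
    intro x hx
    have h := hP.re_dotProduct_pos (hNxne x hx)
    exact Real.sqrt_pos.mpr (by simpa [innerP] using h)
  -- scaling of normP
  have hsm : ∀ (r : ℝ) (v : Fin n → ℂ), normP P ((r : ℂ) • v) = |r| * normP P v := by
    intro r v
    unfold normP innerP
    have h1 : star ((r:ℂ) • v) ⬝ᵥ P *ᵥ ((r:ℂ) • v)
        = ((r * r : ℝ) : ℂ) * (star v ⬝ᵥ P *ᵥ v) := by
      rw [star_smul, Matrix.mulVec_smul, smul_dotProduct, dotProduct_smul]
      simp only [smul_eq_mul, Complex.star_def, Complex.conj_ofReal]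
      push_cast
      ring
    rw [h1, Complex.re_ofReal_mul,
      show r * r * (star v ⬝ᵥ P *ᵥ v).re = |r| ^ 2 * (star v ⬝ᵥ P *ᵥ v).re by
        rw [sq_abs]; ring,
      Real.sqrt_mul (sq_nonneg |r|), Real.sqrt_sq (abs_nonneg r)]
  -- attainment
  have hattain : ∀ (l : ℝ) (x : Fin n → ℂ), x ≠ 0 → M *ᵥ x = (l : ℂ) • N *ᵥ x →
      normP P ((M - (μ : ℂ) • N) *ᵥ x) / normP P (N *ᵥ x) = |l - μ| := by
    intro l x hx hlx
    have heq : (M - (μ : ℂ) • N) *ᵥ x = ((l - μ : ℝ) : ℂ) • (N *ᵥ x) := by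
      rw [Matrix.sub_mulVec, Matrix.smul_mulVec, hlx, ← sub_smul]
      push_cast
      ring_nf
    rw [heq, hsm, mul_div_assoc, div_self (ne_of_gt (hposN x hx)), mul_one]
  -- nearest eigenvalue
  obtain ⟨i0, -, hi0⟩ := Finset.exists_min_image (Finset.univ : Finset (Fin n))
    (fun i => |ev i - μ|) ⟨⟨0, hn⟩, Finset.mem_univ _⟩
  set d : ℝ := |ev i0 - μ| with hd_def
  have hd0 : 0 ≤ d := abs_nonneg _
  have hdle : ∀ i, d ≤ |ev i - μ| := fun i => hi0 i (Finset.mem_univ i)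
  -- lower bound for the quotient set
  have hQM : Q * M = A * (Q * N) := by
    rw [hAdef]
    simp only [Matrix.mul_assoc, cQr]
    rw [hBN]
  have hlb : ∀ r ∈ {r : ℝ | ∃ x : Fin n → ℂ, x ≠ 0 ∧
      r = normP P ((M - (μ : ℂ) • N).mulVec x) / normP P (N.mulVec x)}, d ≤ r := by
    rintro r ⟨x, hx, rfl⟩
    have hy : N *ᵥ x ≠ 0 := hNxne x hx
    have hz : Q *ᵥ (N *ᵥ x) ≠ 0 := hQvne _ hy
    have hzq : Q *ᵥ (N *ᵥ x) = (Q * N) *ᵥ x := Matrix.mulVec_mulVec _ _ _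
    have hzpos : 0 < Real.sqrt (nsq (Q *ᵥ (N *ᵥ x))) := Real.sqrt_pos.mpr (nsq_pos hz)
    have hkey : Q *ᵥ ((M - (μ : ℂ) • N) *ᵥ x) = (A - (μ : ℂ) • 1) *ᵥ (Q *ᵥ (N *ᵥ x)) := by
      rw [Matrix.mulVec_mulVec, hzq, Matrix.mulVec_mulVec]
      rw [Matrix.mul_sub, Matrix.sub_mul, Matrix.mul_smul, Matrix.smul_mul,
        Matrix.one_mul, hQM]
    rw [hnormP, hnormP, hkey, le_div_iff₀ hzpos]
    calc d * Real.sqrt (nsq (Q *ᵥ (N *ᵥ x)))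
        = Real.sqrt (d ^ 2 * nsq (Q *ᵥ (N *ᵥ x))) := by
          rw [Real.sqrt_mul (sq_nonneg d), Real.sqrt_sq hd0]
      _ ≤ Real.sqrt (nsq ((A - (μ : ℂ) • 1) *ᵥ (Q *ᵥ (N *ᵥ x)))) :=
          Real.sqrt_le_sqrt (herm_key hAH μ d hd0 hdle _)
  -- eigenvector for the nearest eigenvalue
  have hdet0 : (M - (ev i0 : ℂ) • N).det = 0 := (hspec _).mpr ⟨i0, rfl⟩
  obtain ⟨x0, hx0ne, hx0⟩ := (Matrix.exists_mulVec_eq_zero_iff).mpr hdet0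
  have hMx0 : M *ᵥ x0 = (ev i0 : ℂ) • N *ᵥ x0 := by
    rw [Matrix.sub_mulVec, Matrix.smul_mulVec, sub_eq_zero] at hx0
    exact hx0
  have hSleast : IsLeast {r : ℝ | ∃ x : Fin n → ℂ, x ≠ 0 ∧
      r = normP P ((M - (μ : ℂ) • N).mulVec x) / normP P (N.mulVec x)} d :=
    ⟨⟨x0, hx0ne, (hattain _ _ hx0ne hMx0).symm⟩, hlb⟩
  have hTleast : IsLeast ((fun l : ℝ => |l - μ|) '' {l : ℝ | (l : ℂ) ∈ genSpec M N}) d := by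
    constructor
    · exact ⟨ev i0, (hspec _).mpr ⟨i0, rfl⟩, rfl⟩
    · rintro t ⟨l, hl, rfl⟩
      obtain ⟨i, hi⟩ := (hspec _).mp hl
      have hil : ev i = l := by exact_mod_cast hi
      rw [← hil]
      exact hdle i
  refine ⟨by rw [hSleast.csInf_eq, hTleast.csInf_eq], ?_⟩
  intro lstar _ _ x hx hMx
  exact hattain lstar x hx hMx
end

section
/- Let M, N ∈ ℂ^{n×n} be such that N*M is Hermitian (equivalently, ⟨Mx,Nx⟩ ∈ ℝ for all x ∈ ℂ^n in the standard inner product) and ker M ∩ ker N = {0}. Then M − iN is invertible, the Cayley transform U = (M+iN)(M−iN)⁻¹ is unitary, and N(M−iN)⁻¹ = (1/(2i))(U − I); in particular N(M−iN)⁻¹ is a normal matrix. -/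
open Matrix Filter Topology
open scoped ComplexOrder

/-- if `N*M` is Hermitian and `ker M ∩ ker N = 0` then `M − iN` is
invertible, the Cayley transform `U = (M+iN)(M−iN)⁻¹` is unitary,
`N(M−iN)⁻¹ = (1/(2i))(U − I)`, and `N(M−iN)⁻¹` is normal. -/
theorem stmt_16 {n : ℕ} (M N : Matrix (Fin n) (Fin n) ℂ)
    (hherm : (Nᴴ * M).IsHermitian)
    (hker : ∀ x : Fin n → ℂ, M.mulVec x = 0 → N.mulVec x = 0 → x = 0) :
    IsUnit (M - Complex.I • N) ∧
    ((M + Complex.I • N) * (M - Complex.I • N)⁻¹)ᴴ *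
        ((M + Complex.I • N) * (M - Complex.I • N)⁻¹) = 1 ∧
    N * (M - Complex.I • N)⁻¹ =
      (1 / (2 * Complex.I)) • ((M + Complex.I • N) * (M - Complex.I • N)⁻¹ - 1) ∧
    (N * (M - Complex.I • N)⁻¹)ᴴ * (N * (M - Complex.I • N)⁻¹) =
      (N * (M - Complex.I • N)⁻¹) * (N * (M - Complex.I • N)⁻¹)ᴴ := by
  have hMN : Mᴴ * N = Nᴴ * M := by
    conv_rhs => rw [← hherm]
    simp [conjTranspose_mul]
  have e1 : (M - Complex.I • N)ᴴ = Mᴴ + Complex.I • Nᴴ := by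
    rw [conjTranspose_sub, conjTranspose_smul, Complex.star_def, Complex.conj_I, neg_smul,
      sub_neg_eq_add]
  have e2 : (M + Complex.I • N)ᴴ = Mᴴ - Complex.I • Nᴴ := by
    rw [conjTranspose_add, conjTranspose_smul, Complex.star_def, Complex.conj_I, neg_smul,
      ← sub_eq_add_neg]
  have hAA : (M - Complex.I • N)ᴴ * (M - Complex.I • N) = Mᴴ * M + Nᴴ * N := by
    rw [e1, add_mul, mul_sub, mul_sub, smul_mul_assoc, mul_smul_comm, mul_smul_comm, hMN,
      smul_mul_assoc, smul_smul, Complex.I_mul_I, neg_one_smul]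
    abel
  have hBB : (M + Complex.I • N)ᴴ * (M + Complex.I • N) = Mᴴ * M + Nᴴ * N := by
    rw [e2, sub_mul, mul_add, mul_add, smul_mul_assoc, mul_smul_comm, mul_smul_comm, hMN,
      smul_mul_assoc, smul_smul, Complex.I_mul_I, neg_one_smul]
    abel
  -- injectivity
  have hA0 : ∀ x, (M - Complex.I • N).mulVec x = 0 → x = 0 := by
    intro x hx
    have h1 : star x ⬝ᵥ ((M - Complex.I • N)ᴴ * (M - Complex.I • N)).mulVec x = 0 := by
      rw [← Matrix.mulVec_mulVec, hx, Matrix.mulVec_zero, dotProduct_zero]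
    have e : ∀ P : Matrix (Fin n) (Fin n) ℂ,
        star x ⬝ᵥ (Pᴴ * P).mulVec x = star (P.mulVec x) ⬝ᵥ (P.mulVec x) := by
      intro P
      rw [← Matrix.mulVec_mulVec, Matrix.dotProduct_mulVec, ← Matrix.star_mulVec]
    rw [hAA, Matrix.add_mulVec, dotProduct_add, e M, e N] at h1
    have hM0 : star (M.mulVec x) ⬝ᵥ (M.mulVec x) = 0 ∧
        star (N.mulVec x) ⬝ᵥ (N.mulVec x) = 0 := by
      constructor
      · refine le_antisymm ?_ (dotProduct_star_self_nonneg _)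
        calc star (M.mulVec x) ⬝ᵥ (M.mulVec x)
            ≤ star (M.mulVec x) ⬝ᵥ (M.mulVec x) + star (N.mulVec x) ⬝ᵥ (N.mulVec x) :=
              le_add_of_nonneg_right (dotProduct_star_self_nonneg _)
          _ = 0 := h1
      · refine le_antisymm ?_ (dotProduct_star_self_nonneg _)
        calc star (N.mulVec x) ⬝ᵥ (N.mulVec x)
            ≤ star (M.mulVec x) ⬝ᵥ (M.mulVec x) + star (N.mulVec x) ⬝ᵥ (N.mulVec x) :=
              le_add_of_nonneg_left (dotProduct_star_self_nonneg _)
          _ = 0 := h1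
    exact hker x (dotProduct_star_self_eq_zero.mp hM0.1)
      (dotProduct_star_self_eq_zero.mp hM0.2)
  have hUnit : IsUnit (M - Complex.I • N) := by
    rw [← Matrix.mulVec_injective_iff_isUnit]
    intro x y hxy
    have := hA0 (x - y) (by rw [Matrix.mulVec_sub, hxy, sub_self])
    exact sub_eq_zero.mp this
  have hInv : (M - Complex.I • N) * (M - Complex.I • N)⁻¹ = 1 :=
    Matrix.mul_nonsing_inv _ ((Matrix.isUnit_iff_isUnit_det _).mp hUnit)
  have hUU : ((M + Complex.I • N) * (M - Complex.I • N)⁻¹)ᴴ *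
      ((M + Complex.I • N) * (M - Complex.I • N)⁻¹) = 1 := by
    have key : ∀ X Y : Matrix (Fin n) (Fin n) ℂ, (X * Y)ᴴ * (X * Y) = Yᴴ * (Xᴴ * X) * Y := by
      intro X Y
      rw [conjTranspose_mul]
      noncomm_ring
    rw [key, hBB, ← hAA, ← key, hInv]
    simp
  have h3 : N * (M - Complex.I • N)⁻¹ =
      (1 / (2 * Complex.I)) • ((M + Complex.I • N) * (M - Complex.I • N)⁻¹ - 1) := by
    have hBA : (M + Complex.I • N) - (M - Complex.I • N) = (2 * Complex.I) • N := by
      have : (2 * Complex.I) • N = Complex.I • N + Complex.I • N := by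
        rw [two_mul, add_smul]
      rw [this]; abel
    rw [eq_comm]
    calc (1 / (2 * Complex.I)) • ((M + Complex.I • N) * (M - Complex.I • N)⁻¹ - 1)
        = (1 / (2 * Complex.I)) •
            (((M + Complex.I • N) - (M - Complex.I • N)) * (M - Complex.I • N)⁻¹) := by
          rw [Matrix.sub_mul, hInv]
      _ = (1 / (2 * Complex.I)) • ((2 * Complex.I) • (N * (M - Complex.I • N)⁻¹)) := by
          rw [hBA, Matrix.smul_mul]
      _ = N * (M - Complex.I • N)⁻¹ := by
          rw [smul_smul, one_div, inv_mul_cancel₀ (by simp [Complex.I_ne_zero]), one_smul]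
  refine ⟨hUnit, hUU, h3, ?_⟩
  -- normality
  have hUU' : ((M + Complex.I • N) * (M - Complex.I • N)⁻¹) *
      ((M + Complex.I • N) * (M - Complex.I • N)⁻¹)ᴴ = 1 :=
    mul_eq_one_comm.mp hUU
  set U := (M + Complex.I • N) * (M - Complex.I • N)⁻¹ with hU
  have hsub : (U - 1)ᴴ * (U - 1) = (U - 1) * (U - 1)ᴴ := by
    simp only [conjTranspose_sub, conjTranspose_one, sub_mul, mul_sub, hUU, hUU', one_mul,
      mul_one]
    abel
  rw [h3, conjTranspose_smul, smul_mul_assoc, smul_mul_assoc, Matrix.mul_smul,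
    Matrix.mul_smul, smul_smul, smul_smul, hsub, mul_comm]
end

section
/- Let M, N ∈ ℂ^{n×n} be such that N*M is Hermitian, ker M ∩ ker N = {0}, and N ≠ 0 (so that M − iN is invertible). Then, with ‖·‖ denoting the spectral (operator) norm and Euclidean vector norms, inf{‖Mx‖/‖Nx‖ : x ∈ ℂ^n, Nx ≠ 0} = √(1/‖N(M−iN)⁻¹‖² − 1). -/
open Matrix Filter Topology
open scoped ComplexOrder

open scoped Matrix.Norms.L2Operator

noncomputable def enorm' {n : ℕ} (x : Fin n → ℂ) : ℝ :=
  Real.sqrt (star x ⬝ᵥ x).re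

lemma re_star_dot {n : ℕ} (x : Fin n → ℂ) : (star x ⬝ᵥ x).re = ∑ i, ‖x i‖ ^ 2 := by
  simp [dotProduct, Complex.re_sum, ← Complex.normSq_eq_norm_sq, Complex.normSq_eq_conj_mul_self,
    Complex.sq_norm, Complex.normSq_apply]

lemma re_star_dot_nonneg {n : ℕ} (x : Fin n → ℂ) : 0 ≤ (star x ⬝ᵥ x).re := by
  rw [re_star_dot]; positivity

lemma enorm_sq {n : ℕ} (x : Fin n → ℂ) : enorm' x ^ 2 = (star x ⬝ᵥ x).re :=
  Real.sq_sqrt (re_star_dot_nonneg x)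

lemma enorm_nonneg {n : ℕ} (x : Fin n → ℂ) : 0 ≤ enorm' x := Real.sqrt_nonneg _

lemma enorm_eq {n : ℕ} (x : Fin n → ℂ) :
    enorm' x = ‖(WithLp.equiv 2 (Fin n → ℂ)).symm x‖ := by
  rw [enorm', re_star_dot, EuclideanSpace.norm_eq]
  simp

lemma enorm'_eq_zero {n : ℕ} (x : Fin n → ℂ) : enorm' x = 0 ↔ x = 0 := by
  rw [enorm_eq, norm_eq_zero]
  constructor
  · intro h; simpa using congrArg (WithLp.equiv 2 (Fin n → ℂ)) h
  · rintro rfl; simp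

lemma dot_aux {n : ℕ} (A B : Matrix (Fin n) (Fin n) ℂ) (x : Fin n → ℂ) :
    star (A.mulVec x) ⬝ᵥ B.mulVec x = star x ⬝ᵥ (Aᴴ * B).mulVec x := by
  rw [star_mulVec, ← Matrix.dotProduct_mulVec, Matrix.mulVec_mulVec]

lemma key_dot {n : ℕ} (M N : Matrix (Fin n) (Fin n) ℂ) (hherm : (Nᴴ * M).IsHermitian)
    (x : Fin n → ℂ) :
    star ((M - Complex.I • N).mulVec x) ⬝ᵥ (M - Complex.I • N).mulVec x
      = star (M.mulVec x) ⬝ᵥ M.mulVec x + star (N.mulVec x) ⬝ᵥ N.mulVec x := by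
  have hMN : Mᴴ * N = Nᴴ * M := by
    have := hherm.eq
    rw [conjTranspose_mul, conjTranspose_conjTranspose] at this
    exact this
  have ha : star (M.mulVec x) ⬝ᵥ N.mulVec x = star (N.mulVec x) ⬝ᵥ M.mulVec x := by
    rw [dot_aux, dot_aux, hMN]
  have hT : (M - Complex.I • N).mulVec x = M.mulVec x - Complex.I • N.mulVec x := by
    rw [Matrix.sub_mulVec, Matrix.smul_mulVec]
  rw [hT]
  simp only [star_sub, star_smul, Complex.star_def, Complex.conj_I, dotProduct_sub,
    sub_dotProduct, add_dotProduct, dotProduct_add, dotProduct_smul, smul_dotProduct, neg_smul,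
    smul_eq_mul, neg_mul, sub_neg_eq_add]
  rw [ha]
  ring_nf
  rw [Complex.I_sq]; ring

lemma exists_norm_attained {n : ℕ} (hn : 1 ≤ n)
    (f : EuclideanSpace ℂ (Fin n) →L[ℂ] EuclideanSpace ℂ (Fin n)) :
    ∃ y : EuclideanSpace ℂ (Fin n), ‖y‖ = 1 ∧ ‖f y‖ = ‖f‖ := by
  have hne : (Metric.sphere (0 : EuclideanSpace ℂ (Fin n)) 1).Nonempty := by
    have : Nontrivial (EuclideanSpace ℂ (Fin n)) := by
      have : Nonempty (Fin n) := ⟨⟨0, hn⟩⟩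
      infer_instance
    exact NormedSpace.sphere_nonempty.mpr zero_le_one
  obtain ⟨y, hy, hmax⟩ := (isCompact_sphere (0 : EuclideanSpace ℂ (Fin n)) 1).exists_isMaxOn hne
    ((continuous_norm.comp f.continuous).continuousOn)
  rw [mem_sphere_zero_iff_norm] at hy
  refine ⟨y, hy, le_antisymm ((f.le_opNorm y).trans_eq (by rw [hy, mul_one])) ?_⟩
  refine f.opNorm_le_bound (norm_nonneg _) fun z => ?_
  rcases eq_or_ne z 0 with rfl | hz
  · simp
  · have hzn : ‖z‖ ≠ 0 := norm_ne_zero_iff.mpr hz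
    have hmem : (‖z‖⁻¹ : ℂ) • z ∈ Metric.sphere (0 : EuclideanSpace ℂ (Fin n)) 1 := by
      simp [mem_sphere_zero_iff_norm, norm_smul, Complex.norm_real, Real.norm_eq_abs, abs_norm,
        inv_mul_cancel₀ hzn]
    have := hmax hmem
    simp only [Function.comp_apply, _root_.map_smul, norm_smul] at this
    have h2 : ‖z‖⁻¹ * ‖f z‖ ≤ ‖f y‖ := by
      simpa [norm_smul, Complex.norm_real, Real.norm_eq_abs, abs_norm] using this
    calc ‖f z‖ = ‖z‖ * (‖z‖⁻¹ * ‖f z‖) := by field_simp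
    _ ≤ ‖z‖ * ‖f y‖ := by gcongr
    _ = ‖f y‖ * ‖z‖ := mul_comm _ _

/-- `inf_{Nx ≠ 0} ‖Mx‖/‖Nx‖ = √(1/‖N(M−iN)⁻¹‖² − 1)` with the spectral
matrix norm and Euclidean vector norms. -/
theorem stmt_17 {n : ℕ} (hn : 1 ≤ n) (M N : Matrix (Fin n) (Fin n) ℂ)
    (hherm : (Nᴴ * M).IsHermitian)
    (hker : ∀ x : Fin n → ℂ, M.mulVec x = 0 → N.mulVec x = 0 → x = 0)
    (hN : N ≠ 0) :
    sInf {r : ℝ | ∃ x : Fin n → ℂ, N.mulVec x ≠ 0 ∧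
        r = enorm' (M.mulVec x) / enorm' (N.mulVec x)} =
      Real.sqrt (1 / ‖N * (M - Complex.I • N)⁻¹‖ ^ 2 - 1) := by
  classical
  set T : Matrix (Fin n) (Fin n) ℂ := M - Complex.I • N with hTdef
  have hkey : ∀ x : Fin n → ℂ,
      enorm' (T.mulVec x) ^ 2 = enorm' (M.mulVec x) ^ 2 + enorm' (N.mulVec x) ^ 2 := by
    intro x
    rw [enorm_sq, enorm_sq, enorm_sq, hTdef, key_dot M N hherm x, Complex.add_re]
  have hdet : T.det ≠ 0 := by
    intro h
    obtain ⟨v, hv0, hv⟩ := (Matrix.exists_mulVec_eq_zero_iff).mpr h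
    have h1 : enorm' (M.mulVec v) ^ 2 + enorm' (N.mulVec v) ^ 2 = 0 := by
      rw [← hkey, hv]
      simp [enorm']
    have hM0 : enorm' (M.mulVec v) = 0 ∧ enorm' (N.mulVec v) = 0 := by
      constructor <;> nlinarith [sq_nonneg (enorm' (M.mulVec v)), sq_nonneg (enorm' (N.mulVec v)),
        enorm_nonneg (M.mulVec v), enorm_nonneg (N.mulVec v)]
    exact hv0 (hker v ((enorm'_eq_zero _).mp hM0.1) ((enorm'_eq_zero _).mp hM0.2))
  have hU : IsUnit T.det := isUnit_iff_ne_zero.mpr hdet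
  set A : Matrix (Fin n) (Fin n) ℂ := N * T⁻¹ with hAdef
  have hAT : A * T = N := by
    rw [hAdef, mul_assoc, Matrix.nonsing_inv_mul T hU, mul_one]
  have hATv : ∀ x : Fin n → ℂ, A.mulVec (T.mulVec x) = N.mulVec x := by
    intro x; rw [Matrix.mulVec_mulVec, hAT]
  have hTsurj : ∀ y : Fin n → ℂ, T.mulVec (T⁻¹.mulVec y) = y := by
    intro y; rw [Matrix.mulVec_mulVec, Matrix.mul_nonsing_inv T hU, Matrix.one_mulVec]
  set c : ℝ := ‖A‖ with hcdef
  have hA0 : A ≠ 0 := by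
    intro h
    apply hN
    rw [← hAT, h, zero_mul]
  have hc0 : 0 < c := by
    rw [hcdef]
    exact norm_pos_iff.mpr hA0
  -- Claim A : pointwise bound
  have hA_le : ∀ y : Fin n → ℂ, enorm' (A.mulVec y) ≤ c * enorm' y := by
    intro y
    have h := Matrix.l2_opNorm_mulVec A ((WithLp.equiv 2 (Fin n → ℂ)).symm y)
    rw [enorm_eq, enorm_eq]
    exact h
  -- attainment
  obtain ⟨y, hy1, hyA⟩ := exists_norm_attained hn (Matrix.toEuclideanCLM (𝕜 := ℂ) A)
  set y' : Fin n → ℂ := WithLp.equiv 2 (Fin n → ℂ) y with hy'def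
  have hy'norm : enorm' y' = 1 := by
    rw [enorm_eq]
    simpa [hy'def] using hy1
  have hy'A : enorm' (A.mulVec y') = c := by
    have hfy : (Matrix.toEuclideanCLM (𝕜 := ℂ) A) y
        = (WithLp.equiv 2 (Fin n → ℂ)).symm (A.mulVec y') := by
      have h2 := Matrix.toEuclideanCLM_toLp (𝕜 := ℂ) A y'
      simpa [hy'def, Matrix.toLin'_apply] using h2
    rw [enorm_eq, ← hfy, hyA]
    exact (Matrix.cstar_norm_def A).symm
  set x₀ : Fin n → ℂ := T⁻¹.mulVec y' with hx₀def
  have hTx₀ : T.mulVec x₀ = y' := hTsurj y'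
  have hNx₀ : enorm' (N.mulVec x₀) = c := by rw [← hATv x₀, hTx₀]; exact hy'A
  have hNx₀ne : N.mulVec x₀ ≠ 0 := by
    intro h
    rw [(enorm'_eq_zero _).mpr h] at hNx₀
    exact hc0.ne hNx₀
  set g₀ : ℝ := enorm' (M.mulVec x₀) with hg₀def
  have hg : g₀ ^ 2 = 1 - c ^ 2 := by
    have h := hkey x₀
    rw [hTx₀, hy'norm, hNx₀] at h
    rw [hg₀def]; nlinarith [h]
  have htarget : Real.sqrt (1 / c ^ 2 - 1) = g₀ / c := by
    rw [show 1 / c ^ 2 - 1 = (g₀ / c) ^ 2 by rw [div_pow, hg]; field_simp]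
    exact Real.sqrt_sq (div_nonneg (enorm_nonneg _) hc0.le)
  have hSmem : g₀ / c ∈ {r : ℝ | ∃ x : Fin n → ℂ, N.mulVec x ≠ 0 ∧
      r = enorm' (M.mulVec x) / enorm' (N.mulVec x)} := ⟨x₀, hNx₀ne, by rw [hNx₀]⟩
  have hbdd : BddBelow {r : ℝ | ∃ x : Fin n → ℂ, N.mulVec x ≠ 0 ∧
      r = enorm' (M.mulVec x) / enorm' (N.mulVec x)} := by
    refine ⟨0, ?_⟩
    rintro r ⟨x, hx, rfl⟩
    exact div_nonneg (enorm_nonneg _) (enorm_nonneg _)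
  apply le_antisymm
  · rw [htarget]
    exact csInf_le hbdd hSmem
  · refine le_csInf ⟨g₀ / c, hSmem⟩ ?_
    rintro r ⟨x, hNx, rfl⟩
    have hfpos : 0 < enorm' (N.mulVec x) := by
      rcases (enorm_nonneg (N.mulVec x)).lt_or_eq with h | h
      · exact h
      · exact absurd ((enorm'_eq_zero _).mp h.symm) hNx
    have h := hA_le (T.mulVec x)
    rw [hATv] at h
    have hsq : enorm' (N.mulVec x) ^ 2
        ≤ c ^ 2 * (enorm' (M.mulVec x) ^ 2 + enorm' (N.mulVec x) ^ 2) := by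
      have h2 : enorm' (N.mulVec x) ^ 2 ≤ (c * enorm' (T.mulVec x)) ^ 2 :=
        pow_le_pow_left₀ (enorm_nonneg _) h 2
      calc enorm' (N.mulVec x) ^ 2 ≤ (c * enorm' (T.mulVec x)) ^ 2 := h2
      _ = c ^ 2 * enorm' (T.mulVec x) ^ 2 := by ring
      _ = c ^ 2 * (enorm' (M.mulVec x) ^ 2 + enorm' (N.mulVec x) ^ 2) := by rw [hkey]
    have h3 : 1 / c ^ 2 - 1 ≤ (enorm' (M.mulVec x) / enorm' (N.mulVec x)) ^ 2 := by
      rw [div_pow, show 1 / c ^ 2 - 1 = (1 - c ^ 2) / c ^ 2 by field_simp,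
        div_le_div_iff₀ (pow_pos hc0 2) (pow_pos hfpos 2)]
      nlinarith [hsq]
    calc Real.sqrt (1 / c ^ 2 - 1)
        ≤ Real.sqrt ((enorm' (M.mulVec x) / enorm' (N.mulVec x)) ^ 2) := Real.sqrt_le_sqrt h3
    _ = enorm' (M.mulVec x) / enorm' (N.mulVec x) :=
        Real.sqrt_sq (div_nonneg (enorm_nonneg _) (enorm_nonneg _))
end
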